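/- arXiv:2102.05279 — 6 statements merged into one kernel-verified Lean document; each statement's English description precedes it below -/
import Mathlib

section
/- Let A be the m×m matrix with diagonal entries 1 - 1/n and off-diagonal entries β p_i/n (entry in row i, column j, i ≠ j), where p_i > 0, Σ p_i = 1, β ≥ 0. Let g denote its Perron eigenvalue (the largest eigenvalue). Then for every t ∈ ℕ and every vector s ≥ 0, ‖Aᵗ s‖₁ ≤ gᵗ (Σᵢ sᵢ²/pᵢ)^{1/2}. -/
open Matrix

lemma l1aux_conj_pow {m : ℕ} (U V D : Matrix (Fin m) (Fin m) ℝ) (hVU : V * U = 1)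
    (hUV : U * V = 1) (t : ℕ) : (U * D * V) ^ t = U * D ^ t * V := by
  induction t with
  | zero => simpa using hUV.symm
  | succ k ih =>
    rw [pow_succ, ih, show (U * D ^ k * V) * (U * D * V)
        = U * (D ^ k * (V * U) * D) * V by noncomm_ring, hVU, Matrix.mul_one, pow_succ]

lemma l1aux_pow_spectral {m : ℕ} (C : Matrix (Fin m) (Fin m) ℝ) (hC : C.IsHermitian) (t : ℕ) :
    C ^ t = (hC.eigenvectorUnitary : Matrix (Fin m) (Fin m) ℝ)
      * diagonal (fun i => hC.eigenvalues i ^ t)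
      * star (hC.eigenvectorUnitary : Matrix (Fin m) (Fin m) ℝ) := by
  have h := hC.spectral_theorem
  simp only [RCLike.ofReal_real_eq_id, Function.comp_def, id_eq, Unitary.conjStarAlgAut_apply] at h
  have h2 := congrArg (fun M => M ^ t) h
  rw [h2, l1aux_conj_pow _ _ _ (Unitary.coe_star_mul_self _) (Unitary.coe_mul_star_self _),
    diagonal_pow]
  rfl

lemma l1aux_unitary_dot {m : ℕ} (U : Matrix.unitaryGroup (Fin m) ℝ) (v w : Fin m → ℝ) :
    ((U : Matrix (Fin m) (Fin m) ℝ) *ᵥ v) ⬝ᵥ ((U : Matrix (Fin m) (Fin m) ℝ) *ᵥ w) = v ⬝ᵥ w := by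
  have hUU : star (U : Matrix (Fin m) (Fin m) ℝ) * U = 1 := Unitary.coe_star_mul_self _
  rw [Matrix.star_eq_conjTranspose] at hUU
  rw [Matrix.dotProduct_mulVec, Matrix.vecMul_mulVec]
  rw [show ((U : Matrix (Fin m) (Fin m) ℝ))ᵀ = ((U : Matrix (Fin m) (Fin m) ℝ))ᴴ by
    ext i j; simp [Matrix.conjTranspose_apply]]
  rw [hUU, Matrix.vecMul_one]

/-- For the matrix A with diagonal entries 1 - 1/n and off-diagonal (i,j) entries β pᵢ/n,
with Perron (largest) eigenvalue g, and any componentwise nonnegative vector s,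
‖Aᵗ s‖₁ ≤ gᵗ √(Σᵢ sᵢ²/pᵢ). -/
theorem l1_norm_pow_mulVec_le {m n : ℕ} (hn : 1 ≤ n) (p : Fin m → ℝ) (hp : ∀ i, 0 < p i)
    (hp1 : ∑ i, p i = 1) (β : ℝ) (hβ : 0 ≤ β)
    (A : Matrix (Fin m) (Fin m) ℝ)
    (hA : ∀ i j, A i j = if i = j then 1 - 1 / (n : ℝ) else β * p i / n)
    (g : ℝ) (hg : Module.End.HasEigenvalue (Matrix.toLin' A) g)
    (hgmax : ∀ μ : ℝ, Module.End.HasEigenvalue (Matrix.toLin' A) μ → μ ≤ g) :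
    ∀ (t : ℕ) (s : Fin m → ℝ), (∀ i, 0 ≤ s i) →
      ∑ i, |((A ^ t).mulVec s) i| ≤ g ^ t * Real.sqrt (∑ i, s i ^ 2 / p i) := by
  intro t s hs
  rcases Nat.eq_zero_or_pos m with hm | hm
  · subst hm
    simp
  -- basic facts
  have hn' : (0 : ℝ) < n := by exact_mod_cast Nat.lt_of_lt_of_le Nat.zero_lt_one hn
  have hdiag : (0 : ℝ) ≤ 1 - 1 / n := by
    have : (1 : ℝ) / n ≤ 1 := by
      rw [div_le_one hn']
      exact_mod_cast hn
    linarith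
  have hAnn : ∀ i j, 0 ≤ A i j := by
    intro i j
    rw [hA]
    split
    · exact hdiag
    · exact div_nonneg (mul_nonneg hβ (hp i).le) hn'.le
  set q : Fin m → ℝ := fun i => Real.sqrt (p i) with hq_def
  have hq : ∀ i, 0 < q i := fun i => Real.sqrt_pos.2 (hp i)
  have hqq : ∀ i, q i * q i = p i := fun i => Real.mul_self_sqrt (hp i).le
  set d : Matrix (Fin m) (Fin m) ℝ := diagonal q with hd_def
  set e : Matrix (Fin m) (Fin m) ℝ := diagonal (fun i => (q i)⁻¹) with he_def
  have hde : d * e = 1 := by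
    rw [hd_def, he_def, diagonal_mul_diagonal]
    rw [show (fun i => q i * (q i)⁻¹) = fun _ => (1:ℝ) by
      funext i; exact mul_inv_cancel₀ (hq i).ne']
    exact diagonal_one
  have hed : e * d = 1 := by
    rw [hd_def, he_def, diagonal_mul_diagonal]
    rw [show (fun i => (q i)⁻¹ * q i) = fun _ => (1:ℝ) by
      funext i; exact inv_mul_cancel₀ (hq i).ne']
    exact diagonal_one
  set C : Matrix (Fin m) (Fin m) ℝ := e * A * d with hC_def
  have hCapp : ∀ i j, C i j = (q i)⁻¹ * A i j * q j := by
    intro i j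
    rw [hC_def, Matrix.mul_diagonal, Matrix.diagonal_mul]
  have hCsym : C.IsHermitian := by
    rw [Matrix.IsHermitian]
    ext i j
    rw [Matrix.conjTranspose_apply, hCapp, hCapp]
    simp only [star_trivial]
    rcases eq_or_ne i j with rfl | hij
    · rfl
    · rw [hA j i, hA i j, if_neg (Ne.symm hij), if_neg hij, ← hqq i, ← hqq j]
      have h1 := (hq i).ne'
      have h2 := (hq j).ne'
      field_simp
  have hCnn : ∀ i j, 0 ≤ C i j := by
    intro i j
    rw [hCapp]
    exact mul_nonneg (mul_nonneg (inv_nonneg.2 (hq i).le) (hAnn i j)) (hq j).le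
  -- each eigenvalue of C is an eigenvalue of A, hence ≤ g
  have hlam_le : ∀ i, hCsym.eigenvalues i ≤ g := by
    intro i
    apply hgmax
    set b : Fin m → ℝ := ⇑(hCsym.eigenvectorBasis i) with hb_def
    have hb : C *ᵥ b = hCsym.eigenvalues i • b := hCsym.mulVec_eigenvectorBasis i
    have hbne : b ≠ 0 := by
      intro h0
      have h1 : ‖hCsym.eigenvectorBasis i‖ = 1 := hCsym.eigenvectorBasis.orthonormal.1 i
      rw [EuclideanSpace.norm_eq] at h1
      have : ∀ j, (hCsym.eigenvectorBasis i) j = 0 := fun j => congrFun h0 j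
      simp [this] at h1
    have hvne : d *ᵥ b ≠ 0 := by
      intro h0
      apply hbne
      have : e *ᵥ (d *ᵥ b) = b := by rw [Matrix.mulVec_mulVec, hed, Matrix.one_mulVec]
      rw [h0, Matrix.mulVec_zero] at this
      exact this.symm
    apply Module.End.hasEigenvalue_of_hasEigenvector (x := d *ᵥ b)
    constructor
    · rw [Module.End.mem_eigenspace_iff, Matrix.toLin'_apply]
      have hkey : A *ᵥ (d *ᵥ b) = d *ᵥ (C *ᵥ b) := by
        rw [Matrix.mulVec_mulVec, Matrix.mulVec_mulVec, hC_def,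
          show d * (e * A * d) = (d * e) * (A * d) by noncomm_ring, hde, Matrix.one_mul]
      rw [hkey, hb, Matrix.mulVec_smul]
    · exact hvne
  have hUstar : (hCsym.eigenvectorUnitary : Matrix (Fin m) (Fin m) ℝ)
      * star (hCsym.eigenvectorUnitary : Matrix (Fin m) (Fin m) ℝ) = 1 :=
    Unitary.coe_mul_star_self _
  have hUc : ∀ y : Fin m → ℝ, ((hCsym.eigenvectorUnitary : Matrix (Fin m) (Fin m) ℝ)) *ᵥ (star ((hCsym.eigenvectorUnitary : Matrix (Fin m) (Fin m) ℝ)) *ᵥ y) = y := by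
    intro y
    rw [Matrix.mulVec_mulVec, hUstar, Matrix.one_mulVec]
  have hpowvec : ∀ (k : ℕ) (y : Fin m → ℝ),
      (C ^ k) *ᵥ y = ((hCsym.eigenvectorUnitary : Matrix (Fin m) (Fin m) ℝ)) *ᵥ (fun i => hCsym.eigenvalues i ^ k * (star ((hCsym.eigenvectorUnitary : Matrix (Fin m) (Fin m) ℝ)) *ᵥ y) i) := by
    intro k y
    rw [l1aux_pow_spectral C hCsym k, ← Matrix.mulVec_mulVec, ← Matrix.mulVec_mulVec]
    have hdv : ∀ v : Fin m → ℝ, (diagonal fun i => hCsym.eigenvalues i ^ k) *ᵥ v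
        = fun i => hCsym.eigenvalues i ^ k * v i := by
      intro v
      funext i
      exact Matrix.mulVec_diagonal _ _ _
    rw [hdv]
  have hsumy : ∀ y : Fin m → ℝ, ∑ i, ((star ((hCsym.eigenvectorUnitary : Matrix (Fin m) (Fin m) ℝ)) *ᵥ y) i) ^ 2 = ∑ i, (y i) ^ 2 := by
    intro y
    have h0 : y ⬝ᵥ y = (star ((hCsym.eigenvectorUnitary : Matrix (Fin m) (Fin m) ℝ)) *ᵥ y) ⬝ᵥ (star ((hCsym.eigenvectorUnitary : Matrix (Fin m) (Fin m) ℝ)) *ᵥ y) := by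
      conv_lhs => rw [← hUc y]
      rw [l1aux_unitary_dot]
    simp only [dotProduct, ← pow_two] at h0
    exact h0.symm
  have hrayeq : ∀ y : Fin m → ℝ,
      y ⬝ᵥ (C *ᵥ y) = ∑ i, hCsym.eigenvalues i * ((star ((hCsym.eigenvectorUnitary : Matrix (Fin m) (Fin m) ℝ)) *ᵥ y) i) ^ 2 := by
    intro y
    have h1 : C *ᵥ y = ((hCsym.eigenvectorUnitary : Matrix (Fin m) (Fin m) ℝ)) *ᵥ (fun i => hCsym.eigenvalues i * (star ((hCsym.eigenvectorUnitary : Matrix (Fin m) (Fin m) ℝ)) *ᵥ y) i) := by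
      simpa using hpowvec 1 y
    calc y ⬝ᵥ (C *ᵥ y)
        = (((hCsym.eigenvectorUnitary : Matrix (Fin m) (Fin m) ℝ)) *ᵥ (star ((hCsym.eigenvectorUnitary : Matrix (Fin m) (Fin m) ℝ)) *ᵥ y)) ⬝ᵥ (((hCsym.eigenvectorUnitary : Matrix (Fin m) (Fin m) ℝ)) *ᵥ (fun i => hCsym.eigenvalues i * (star ((hCsym.eigenvectorUnitary : Matrix (Fin m) (Fin m) ℝ)) *ᵥ y) i)) := by
          rw [h1, hUc]
      _ = (star ((hCsym.eigenvectorUnitary : Matrix (Fin m) (Fin m) ℝ)) *ᵥ y) ⬝ᵥ (fun i => hCsym.eigenvalues i * (star ((hCsym.eigenvectorUnitary : Matrix (Fin m) (Fin m) ℝ)) *ᵥ y) i) := l1aux_unitary_dot hCsym.eigenvectorUnitary _ _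
      _ = ∑ i, hCsym.eigenvalues i * ((star ((hCsym.eigenvectorUnitary : Matrix (Fin m) (Fin m) ℝ)) *ᵥ y) i) ^ 2 := by
          simp only [dotProduct]
          exact Finset.sum_congr rfl fun i _ => by ring
  have hraybound : ∀ y : Fin m → ℝ, y ⬝ᵥ (C *ᵥ y) ≤ g * ∑ i, (y i) ^ 2 := by
    intro y
    rw [hrayeq y, ← hsumy y, Finset.mul_sum]
    apply Finset.sum_le_sum
    intro i _
    exact mul_le_mul_of_nonneg_right (hlam_le i) (sq_nonneg _)
  -- g is nonnegative
  have hg0 : 0 ≤ g := by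
    have i₀ : Fin m := ⟨0, hm⟩
    set y : Fin m → ℝ := Pi.single i₀ 1 with hy_def
    have hyy : y ⬝ᵥ (C *ᵥ y) = C i₀ i₀ := by
      simp [hy_def, dotProduct, Matrix.mulVec_single, Pi.single_apply]
    have hys : ∑ i, (y i) ^ 2 = 1 := by
      simp [hy_def, Pi.single_apply, apply_ite (· ^ (2:ℕ))]
    have h1 := hraybound y
    rw [hyy, hys, mul_one] at h1
    exact le_trans (hCnn i₀ i₀) h1
  -- |eigenvalues| are bounded by g
  have hlam2 : ∀ i, hCsym.eigenvalues i ^ 2 ≤ g ^ 2 := by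
    intro i
    set b : Fin m → ℝ := ⇑(hCsym.eigenvectorBasis i) with hb_def
    have hb : C *ᵥ b = hCsym.eigenvalues i • b := hCsym.mulVec_eigenvectorBasis i
    have hb1 : ∑ j, b j ^ 2 = 1 := by
      have h1 : ‖hCsym.eigenvectorBasis i‖ = 1 := hCsym.eigenvectorBasis.orthonormal.1 i
      rw [EuclideanSpace.norm_eq] at h1
      have h2 := congrArg (· ^ 2) h1
      simp only at h2
      rw [Real.sq_sqrt (by positivity), one_pow] at h2
      simpa using h2
    have hbCb : b ⬝ᵥ (C *ᵥ b) = hCsym.eigenvalues i := by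
      rw [hb]
      simp only [dotProduct, Pi.smul_apply, smul_eq_mul]
      have hmid : ∑ j, b j * (hCsym.eigenvalues i * b j) = hCsym.eigenvalues i * ∑ j, b j ^ 2 := by
        rw [Finset.mul_sum]
        exact Finset.sum_congr rfl fun j _ => by ring
      rw [hmid, hb1, mul_one]
    have habs : -(hCsym.eigenvalues i) ≤ (fun j => |b j|) ⬝ᵥ (C *ᵥ (fun j => |b j|)) := by
      rw [← hbCb]
      simp only [dotProduct, Matrix.mulVec, Finset.mul_sum, ← Finset.sum_neg_distrib]
      apply Finset.sum_le_sum
      intro j _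
      apply Finset.sum_le_sum
      intro k _
      calc -(b j * (C j k * b k)) ≤ |b j * (C j k * b k)| := neg_le_abs _
        _ = |b j| * (C j k * |b k|) := by
            rw [abs_mul, abs_mul, abs_of_nonneg (hCnn j k)]
    have h2 : (fun j => |b j|) ⬝ᵥ (C *ᵥ (fun j => |b j|)) ≤ g := by
      have := hraybound (fun j => |b j|)
      rw [show (∑ j, |b j| ^ 2) = ∑ j, b j ^ 2 by
        exact Finset.sum_congr rfl fun j _ => sq_abs _, hb1, mul_one] at this
      exact this
    exact sq_le_sq' (by linarith) (hlam_le i)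
  -- now the main estimate
  have hApow : A ^ t = d * C ^ t * e := by
    have hAd : A = d * C * e := by
      rw [show d * C * e = (d * e) * A * (d * e) by rw [hC_def]; noncomm_ring, hde,
        Matrix.one_mul, Matrix.mul_one]
    rw [hAd, l1aux_conj_pow d e C hed hde t]
  set x : Fin m → ℝ := fun i => (q i)⁻¹ * s i with hx_def
  have hx : e *ᵥ s = x := by
    funext i
    exact Matrix.mulVec_diagonal _ _ _
  set w : Fin m → ℝ := (C ^ t) *ᵥ x with hw_def
  have hAts : (A ^ t) *ᵥ s = fun i => q i * w i := by
    rw [hApow, ← Matrix.mulVec_mulVec, ← Matrix.mulVec_mulVec, hx, ← hw_def]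
    funext i
    exact Matrix.mulVec_diagonal _ _ _
  have hw2 : ∑ i, w i ^ 2 ≤ (g ^ 2) ^ t * ∑ i, x i ^ 2 := by
    have h1 : ∑ i, w i ^ 2 = ∑ i, (hCsym.eigenvalues i ^ t) ^ 2 * ((star ((hCsym.eigenvectorUnitary : Matrix (Fin m) (Fin m) ℝ)) *ᵥ x) i) ^ 2 := by
      have h0 : w ⬝ᵥ w = (fun i => hCsym.eigenvalues i ^ t * (star ((hCsym.eigenvectorUnitary : Matrix (Fin m) (Fin m) ℝ)) *ᵥ x) i) ⬝ᵥ
          (fun i => hCsym.eigenvalues i ^ t * (star ((hCsym.eigenvectorUnitary : Matrix (Fin m) (Fin m) ℝ)) *ᵥ x) i) := by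
        conv_lhs => rw [hw_def, hpowvec t x]
        exact l1aux_unitary_dot hCsym.eigenvectorUnitary _ _
      simp only [dotProduct] at h0
      simp only [pow_two]
      rw [h0]
      exact Finset.sum_congr rfl fun i _ => by ring
    rw [h1, ← hsumy x, Finset.mul_sum]
    apply Finset.sum_le_sum
    intro i _
    apply mul_le_mul_of_nonneg_right _ (sq_nonneg _)
    rw [← pow_mul, mul_comm t 2, pow_mul]
    exact pow_le_pow_left₀ (sq_nonneg _) (hlam2 i) t
  have hxsq : ∑ i, x i ^ 2 = ∑ i, s i ^ 2 / p i := by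
    apply Finset.sum_congr rfl
    intro i _
    rw [hx_def]
    have hpi : p i = q i * q i := (hqq i).symm
    rw [hpi]
    field_simp
  have hS0 : (0:ℝ) ≤ ∑ i, s i ^ 2 / p i := by
    apply Finset.sum_nonneg
    intro i _
    exact div_nonneg (sq_nonneg _) (hp i).le
  have hCS : (∑ i, q i * |w i|) ^ 2 ≤ (∑ i, q i ^ 2) * ∑ i, |w i| ^ 2 :=
    Finset.sum_mul_sq_le_sq_mul_sq _ _ _
  have hq2 : ∑ i, q i ^ 2 = 1 := by
    rw [Finset.sum_congr rfl fun i _ => by rw [pow_two, hqq i]]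
    exact hp1
  have habs2 : ∑ i, |w i| ^ 2 = ∑ i, w i ^ 2 :=
    Finset.sum_congr rfl fun i _ => sq_abs _
  have hT2 : (∑ i, q i * |w i|) ^ 2 ≤ (g ^ t * Real.sqrt (∑ i, s i ^ 2 / p i)) ^ 2 := by
    rw [mul_pow, Real.sq_sqrt hS0, ← pow_mul, mul_comm t 2, pow_mul]
    calc (∑ i, q i * |w i|) ^ 2 ≤ (∑ i, q i ^ 2) * ∑ i, |w i| ^ 2 := hCS
      _ = ∑ i, w i ^ 2 := by rw [hq2, habs2, one_mul]
      _ ≤ (g ^ 2) ^ t * ∑ i, x i ^ 2 := hw2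
      _ = (g ^ 2) ^ t * ∑ i, s i ^ 2 / p i := by rw [hxsq]
  have hT0 : 0 ≤ ∑ i, q i * |w i| :=
    Finset.sum_nonneg fun i _ => mul_nonneg (hq i).le (abs_nonneg _)
  have hR0 : 0 ≤ g ^ t * Real.sqrt (∑ i, s i ^ 2 / p i) :=
    mul_nonneg (pow_nonneg hg0 t) (Real.sqrt_nonneg _)
  have hfin : ∑ i, q i * |w i| ≤ g ^ t * Real.sqrt (∑ i, s i ^ 2 / p i) :=
    (pow_le_pow_iff_left₀ hT0 hR0 two_ne_zero).mp hT2
  calc ∑ i, |((A ^ t).mulVec s) i| = ∑ i, q i * |w i| := by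
        rw [hAts]
        exact Finset.sum_congr rfl fun i _ => by
          rw [abs_mul, abs_of_nonneg (hq i).le]
    _ ≤ g ^ t * Real.sqrt (∑ i, s i ^ 2 / p i) := hfin
end

section
/- With A, g, p as above, for every t ∈ ℕ, every j ∈ {1,…,m}, and every s ≥ 0 componentwise, the j-th entry of Aᵗ s satisfies (Aᵗ s)_j ≤ √(p_j) gᵗ (Σᵢ sᵢ²/pᵢ)^{1/2}. In particular (Aᵗ p)_j ≤ √(p_j) gᵗ and ‖Aᵗ p‖₁ ≤ gᵗ. -/
open Matrix Finset

namespace EntryPowAux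

variable {m : ℕ}

noncomputable def toE (x : Fin m → ℝ) : EuclideanSpace ℝ (Fin m) := (WithLp.equiv 2 _).symm x

lemma inner_toE (x y : Fin m → ℝ) : (inner ℝ (toE x) (toE y) : ℝ) = ∑ i, x i * y i := by
  simp [toE, PiLp.inner_apply, RCLike.inner_apply, mul_comm]

lemma inner_eq_dot (x y : Fin m → ℝ) : (inner ℝ (toE x) (toE y) : ℝ) = x ⬝ᵥ y := by
  rw [inner_toE]; rfl

lemma repr_mulVec {B : Matrix (Fin m) (Fin m) ℝ} (hB : B.IsHermitian)
    (x : Fin m → ℝ) (j : Fin m) :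
    hB.eigenvectorBasis.repr (toE (B *ᵥ x)) j
      = hB.eigenvalues j * hB.eigenvectorBasis.repr (toE x) j := by
  have hvx : toE ⇑(hB.eigenvectorBasis j) = hB.eigenvectorBasis j := rfl
  have hBt : Bᵀ = B := by
    ext i j
    have := congrFun (congrFun hB i) j
    simpa using this
  rw [OrthonormalBasis.repr_apply_apply, OrthonormalBasis.repr_apply_apply,
    ← hvx, inner_eq_dot, inner_eq_dot, dotProduct_mulVec]
  rw [show ⇑(hB.eigenvectorBasis j) ᵥ* B = B *ᵥ ⇑(hB.eigenvectorBasis j) by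
    rw [← vecMul_transpose, hBt]]
  rw [hB.mulVec_eigenvectorBasis, smul_dotProduct, smul_eq_mul]

lemma repr_pow_mulVec {B : Matrix (Fin m) (Fin m) ℝ} (hB : B.IsHermitian)
    (t : ℕ) (x : Fin m → ℝ) (j : Fin m) :
    hB.eigenvectorBasis.repr (toE ((B ^ t) *ᵥ x)) j
      = hB.eigenvalues j ^ t * hB.eigenvectorBasis.repr (toE x) j := by
  induction t with
  | zero => simp
  | succ t ih =>
      rw [pow_succ', ← mulVec_mulVec, repr_mulVec hB, ih, pow_succ']
      ring

lemma dot_pow {B : Matrix (Fin m) (Fin m) ℝ} (hB : B.IsHermitian)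
    (t : ℕ) (x : Fin m → ℝ) :
    x ⬝ᵥ ((B ^ t) *ᵥ x) = ∑ j, hB.eigenvalues j ^ t * (hB.eigenvectorBasis.repr (toE x) j) ^ 2 := by
  rw [← inner_eq_dot, ← hB.eigenvectorBasis.repr.inner_map_map (toE x) (toE ((B^t) *ᵥ x))]
  rw [PiLp.inner_apply]
  refine Finset.sum_congr rfl fun j _ => ?_
  rw [repr_pow_mulVec hB]
  simp [RCLike.inner_apply]
  ring

lemma sum_sq_eq {B : Matrix (Fin m) (Fin m) ℝ} (hB : B.IsHermitian) (x : Fin m → ℝ) :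
    ∑ i, x i ^ 2 = ∑ j, (hB.eigenvectorBasis.repr (toE x) j) ^ 2 := by
  have h := hB.eigenvectorBasis.repr.inner_map_map (toE x) (toE x)
  rw [inner_toE, PiLp.inner_apply] at h
  simp only [RCLike.inner_apply, starRingEnd_apply, star_trivial] at h
  simpa [pow_two] using h.symm

end EntryPowAux

namespace EntryPowAux2
open EntryPowAux
variable {m : ℕ}

lemma dot_pow_le {B : Matrix (Fin m) (Fin m) ℝ} (hB : B.IsHermitian) {g : ℝ}
    (habs : ∀ i, |hB.eigenvalues i| ≤ g) (t : ℕ) (x : Fin m → ℝ) :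
    x ⬝ᵥ ((B ^ t) *ᵥ x) ≤ g ^ t * ∑ i, x i ^ 2 := by
  rw [dot_pow hB t x, sum_sq_eq hB x, Finset.mul_sum]
  refine Finset.sum_le_sum fun j _ => mul_le_mul_of_nonneg_right ?_ (sq_nonneg _)
  calc hB.eigenvalues j ^ t ≤ |hB.eigenvalues j ^ t| := le_abs_self _
    _ = |hB.eigenvalues j| ^ t := abs_pow _ _
    _ ≤ g ^ t := pow_le_pow_left₀ (abs_nonneg _) (habs j) t

lemma quad_le {B : Matrix (Fin m) (Fin m) ℝ} (hB : B.IsHermitian) {g : ℝ}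
    (hev : ∀ i, hB.eigenvalues i ≤ g) (x : Fin m → ℝ) :
    x ⬝ᵥ (B *ᵥ x) ≤ g * ∑ i, x i ^ 2 := by
  have h := dot_pow hB 1 x
  simp only [pow_one] at h
  rw [h, sum_sq_eq hB x, Finset.mul_sum]
  exact Finset.sum_le_sum fun j _ => mul_le_mul_of_nonneg_right (hev j) (sq_nonneg _)

lemma abs_eig_le {B : Matrix (Fin m) (Fin m) ℝ} (hB : B.IsHermitian)
    (hBnn : ∀ i j, 0 ≤ B i j) {g : ℝ} (hev : ∀ i, hB.eigenvalues i ≤ g) (i : Fin m) :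
    |hB.eigenvalues i| ≤ g := by
  set v : Fin m → ℝ := ⇑(hB.eigenvectorBasis i) with hv
  have hvE : toE v = hB.eigenvectorBasis i := rfl
  have hnorm : ‖hB.eigenvectorBasis i‖ = 1 := hB.eigenvectorBasis.orthonormal.1 i
  have hv1 : ∑ k, v k ^ 2 = 1 := by
    have h := inner_toE v v
    rw [hvE, real_inner_self_eq_norm_sq, hnorm] at h
    simpa [pow_two] using h.symm
  set w : Fin m → ℝ := fun k => |v k| with hwdef
  have hw2 : ∑ k, w k ^ 2 = 1 := by simpa [hwdef, sq_abs] using hv1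
  have hBv : B *ᵥ v = hB.eigenvalues i • v := hB.mulVec_eigenvectorBasis i
  have h1 : |hB.eigenvalues i| = |v ⬝ᵥ (B *ᵥ v)| := by
    rw [hBv, dotProduct_smul, smul_eq_mul,
      show v ⬝ᵥ v = 1 from by simpa [dotProduct, pow_two] using hv1, mul_one]
  have inner_bound : ∀ k, |∑ l, B k l * v l| ≤ ∑ l, B k l * w l := fun k =>
    (Finset.abs_sum_le_sum_abs _ _).trans (le_of_eq (Finset.sum_congr rfl fun l _ => by
      rw [abs_mul, abs_of_nonneg (hBnn k l)]))
  have h2 : |v ⬝ᵥ (B *ᵥ v)| ≤ w ⬝ᵥ (B *ᵥ w) := by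
    simp only [dotProduct, mulVec]
    calc |∑ k, v k * ∑ l, B k l * v l| ≤ ∑ k, |v k * ∑ l, B k l * v l| :=
          Finset.abs_sum_le_sum_abs _ _
      _ ≤ ∑ k, w k * ∑ l, B k l * w l := Finset.sum_le_sum fun k _ => by
          rw [abs_mul]
          exact mul_le_mul_of_nonneg_left (inner_bound k) (abs_nonneg _)
  have h3 : w ⬝ᵥ (B *ᵥ w) ≤ g := by
    have := quad_le hB hev w
    rwa [hw2, mul_one] at this
  calc |hB.eigenvalues i| = |v ⬝ᵥ (B *ᵥ v)| := h1
    _ ≤ w ⬝ᵥ (B *ᵥ w) := h2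
    _ ≤ g := h3

lemma entry_bound {B : Matrix (Fin m) (Fin m) ℝ} (hB : B.IsHermitian) {g : ℝ}
    (habs : ∀ i, |hB.eigenvalues i| ≤ g) (hg0 : 0 ≤ g) (t : ℕ) (x : Fin m → ℝ) (j : Fin m) :
    |((B ^ t) *ᵥ x) j| ≤ g ^ t * Real.sqrt (∑ i, x i ^ 2) := by
  have h1 : (((B ^ t) *ᵥ x) j) ^ 2 ≤ ∑ i, ((B ^ t) *ᵥ x) i ^ 2 :=
    Finset.single_le_sum (f := fun i => ((B ^ t) *ᵥ x) i ^ 2) (fun i _ => sq_nonneg _) (Finset.mem_univ j)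
  have h2 : ∑ i, ((B ^ t) *ᵥ x) i ^ 2 ≤ (g ^ t) ^ 2 * ∑ i, x i ^ 2 := by
    calc ∑ i, ((B ^ t) *ᵥ x) i ^ 2
        = ∑ j, (hB.eigenvalues j ^ t * hB.eigenvectorBasis.repr (toE x) j) ^ 2 := by
          rw [sum_sq_eq hB]
          exact Finset.sum_congr rfl fun j _ => by rw [repr_pow_mulVec hB]
      _ ≤ ∑ j, (g ^ t) ^ 2 * (hB.eigenvectorBasis.repr (toE x) j) ^ 2 := by
          refine Finset.sum_le_sum fun j _ => ?_
          rw [mul_pow]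
          refine mul_le_mul_of_nonneg_right ?_ (sq_nonneg _)
          have : |hB.eigenvalues j ^ t| ≤ g ^ t := by
            rw [abs_pow]
            exact pow_le_pow_left₀ (abs_nonneg _) (habs j) t
          calc (hB.eigenvalues j ^ t) ^ 2 = |hB.eigenvalues j ^ t| ^ 2 := (sq_abs _).symm
            _ ≤ (g ^ t) ^ 2 := pow_le_pow_left₀ (abs_nonneg _) this 2
      _ = (g ^ t) ^ 2 * ∑ j, (hB.eigenvectorBasis.repr (toE x) j) ^ 2 :=
          (Finset.mul_sum _ _ _).symm
      _ = (g ^ t) ^ 2 * ∑ i, x i ^ 2 := by rw [← sum_sq_eq hB]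
  calc |((B ^ t) *ᵥ x) j| = Real.sqrt ((((B ^ t) *ᵥ x) j) ^ 2) := (Real.sqrt_sq_eq_abs _).symm
    _ ≤ Real.sqrt ((g ^ t) ^ 2 * ∑ i, x i ^ 2) := Real.sqrt_le_sqrt (h1.trans h2)
    _ = g ^ t * Real.sqrt (∑ i, x i ^ 2) := by
        rw [Real.sqrt_mul (sq_nonneg _), Real.sqrt_sq (pow_nonneg hg0 t)]

end EntryPowAux2

open Matrix Finset EntryPowAux EntryPowAux2

/-- Entrywise bound: (Aᵗ s)ⱼ ≤ √(pⱼ) gᵗ √(Σᵢ sᵢ²/pᵢ) for s ≥ 0, and in particular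
(Aᵗ p)ⱼ ≤ √(pⱼ) gᵗ and ‖Aᵗ p‖₁ ≤ gᵗ, where g is the Perron eigenvalue of A. -/
theorem entry_pow_mulVec_le {m n : ℕ} (hn : 1 ≤ n) (p : Fin m → ℝ) (hp : ∀ i, 0 < p i)
    (hp1 : ∑ i, p i = 1) (β : ℝ) (hβ : 0 ≤ β)
    (A : Matrix (Fin m) (Fin m) ℝ)
    (hA : ∀ i j, A i j = if i = j then 1 - 1 / (n : ℝ) else β * p i / n)
    (g : ℝ) (hg : Module.End.HasEigenvalue (Matrix.toLin' A) g)
    (hgmax : ∀ μ : ℝ, Module.End.HasEigenvalue (Matrix.toLin' A) μ → μ ≤ g) :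
    (∀ (t : ℕ) (j : Fin m) (s : Fin m → ℝ), (∀ i, 0 ≤ s i) →
        ((A ^ t).mulVec s) j ≤ Real.sqrt (p j) * g ^ t * Real.sqrt (∑ i, s i ^ 2 / p i)) ∧
      (∀ (t : ℕ) (j : Fin m), ((A ^ t).mulVec p) j ≤ Real.sqrt (p j) * g ^ t) ∧
      (∀ t : ℕ, ∑ j, |((A ^ t).mulVec p) j| ≤ g ^ t) := by
  -- basic facts
  have hn1 : (1 : ℝ) ≤ (n : ℝ) := by exact_mod_cast hn
  have hn0 : (0 : ℝ) < (n : ℝ) := lt_of_lt_of_le one_pos hn1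
  have hdiag : (0 : ℝ) ≤ 1 - 1 / (n : ℝ) := by
    have : (1 : ℝ) / n ≤ 1 := (div_le_one hn0).2 hn1
    linarith
  -- m is nonempty
  obtain ⟨v₀, hv₀⟩ := hg.exists_hasEigenvector
  have hm : Nonempty (Fin m) := by
    by_contra h
    have hsub : ∀ a b : Fin m → ℝ, a = b := fun a b => funext fun i => absurd ⟨i⟩ h
    exact hv₀.right (hsub _ _)
  -- the symmetrizing vector
  set q : Fin m → ℝ := fun i => Real.sqrt (p i) with hqdef
  have hq : ∀ i, 0 < q i := fun i => Real.sqrt_pos.2 (hp i)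
  have hq2 : ∀ i, q i ^ 2 = p i := fun i => Real.sq_sqrt (hp i).le
  have hqne : ∀ i, q i ≠ 0 := fun i => (hq i).ne'
  -- the symmetrized matrix
  set B : Matrix (Fin m) (Fin m) ℝ := Matrix.of (fun i j => A i j * q j / q i) with hBdef
  have hBapp : ∀ i j, B i j = A i j * q j / q i := fun i j => rfl
  have hBoff : ∀ a b : Fin m, a ≠ b → B a b = β * q a * q b / n := by
    intro a b hab
    rw [hBapp, hA, if_neg hab]
    have hpa : p a = q a * q a := by rw [← hq2 a]; ring
    rw [hpa]
    field_simp [hqne a]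
  have hBsym : B.IsHermitian := by
    refine Matrix.ext fun i j => ?_
    rw [Matrix.conjTranspose_apply, star_trivial]
    by_cases hij : i = j
    · subst hij; rfl
    · rw [hBoff j i (Ne.symm hij), hBoff i j hij]
      ring
  have hBnn : ∀ i j, 0 ≤ B i j := by
    intro i j
    rw [hBapp, hA]
    by_cases hij : i = j
    · rw [if_pos hij]
      exact div_nonneg (mul_nonneg hdiag (hq _).le) (hq _).le
    · rw [if_neg hij]
      exact div_nonneg (mul_nonneg (div_nonneg (mul_nonneg hβ (hp i).le) hn0.le) (hq _).le)
        (hq _).le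
  -- conjugation identity
  have hAD : A * Matrix.diagonal q = Matrix.diagonal q * B := by
    refine Matrix.ext fun i j => ?_
    rw [Matrix.mul_diagonal, Matrix.diagonal_mul, hBapp]
    field_simp [hqne i]
  have hADt : ∀ t : ℕ, A ^ t * Matrix.diagonal q = Matrix.diagonal q * B ^ t := by
    intro t
    induction t with
    | zero => simp
    | succ t ih =>
        rw [pow_succ, pow_succ, mul_assoc, hAD, ← mul_assoc, ih, mul_assoc]
  -- eigenvalues of B are eigenvalues of A, hence ≤ g
  have hev : ∀ i, hBsym.eigenvalues i ≤ g := by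
    intro i
    set v : Fin m → ℝ := ⇑(hBsym.eigenvectorBasis i) with hvdef
    have hvne : v ≠ 0 := by
      intro h
      apply hBsym.eigenvectorBasis.orthonormal.ne_zero i
      have : toE v = hBsym.eigenvectorBasis i := rfl
      rw [← this, h]
      rfl
    have hBv : B *ᵥ v = hBsym.eigenvalues i • v := hBsym.mulVec_eigenvectorBasis i
    set w : Fin m → ℝ := Matrix.diagonal q *ᵥ v with hwdef
    have hwne : w ≠ 0 := by
      intro h
      apply hvne
      funext k
      have hk : w k = 0 := by rw [h]; rfl
      rw [hwdef, Matrix.mulVec_diagonal] at hk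
      have := mul_eq_zero.1 hk
      rcases this with h' | h'
      · exact absurd h' (hqne k)
      · exact h'
    have hAw : A *ᵥ w = hBsym.eigenvalues i • w := by
      rw [hwdef, Matrix.mulVec_mulVec, hAD, ← Matrix.mulVec_mulVec, hBv, Matrix.mulVec_smul]
    have : Module.End.HasEigenvalue (Matrix.toLin' A) (hBsym.eigenvalues i) := by
      apply Module.End.hasEigenvalue_of_hasEigenvector (x := w)
      refine ⟨Module.End.mem_eigenspace_iff.2 ?_, hwne⟩
      rw [Matrix.toLin'_apply]
      exact hAw
    exact hgmax _ this
  have habs : ∀ i, |hBsym.eigenvalues i| ≤ g := abs_eig_le hBsym hBnn hev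
  have hg0 : 0 ≤ g := by
    obtain ⟨i⟩ := hm
    exact (abs_nonneg _).trans (habs i)
  -- the conjugation identity for mulVec
  have hconj : ∀ (t : ℕ) (x : Fin m → ℝ) (j : Fin m),
      ((A ^ t) *ᵥ (Matrix.diagonal q *ᵥ x)) j = q j * ((B ^ t) *ᵥ x) j := by
    intro t x j
    rw [Matrix.mulVec_mulVec, hADt, ← Matrix.mulVec_mulVec, Matrix.mulVec_diagonal]
  -- main entrywise bound (for arbitrary s)
  have key : ∀ (t : ℕ) (j : Fin m) (s : Fin m → ℝ),
      ((A ^ t).mulVec s) j ≤ Real.sqrt (p j) * g ^ t * Real.sqrt (∑ i, s i ^ 2 / p i) := by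
    intro t j s
    set x : Fin m → ℝ := fun i => s i / q i with hxdef
    have hDx : Matrix.diagonal q *ᵥ x = s := by
      funext i
      rw [Matrix.mulVec_diagonal, hxdef]
      field_simp [hqne i]
    have hsum : ∑ i, x i ^ 2 = ∑ i, s i ^ 2 / p i := by
      refine Finset.sum_congr rfl fun i _ => ?_
      rw [hxdef, div_pow, hq2 i]
    calc ((A ^ t).mulVec s) j = q j * ((B ^ t) *ᵥ x) j := by rw [← hDx]; exact hconj t x j
      _ ≤ q j * |((B ^ t) *ᵥ x) j| :=
          mul_le_mul_of_nonneg_left (le_abs_self _) (hq j).le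
      _ ≤ q j * (g ^ t * Real.sqrt (∑ i, x i ^ 2)) :=
          mul_le_mul_of_nonneg_left (entry_bound hBsym habs hg0 t x j) (hq j).le
      _ = Real.sqrt (p j) * g ^ t * Real.sqrt (∑ i, s i ^ 2 / p i) := by
          rw [hsum, hqdef]; ring
  refine ⟨fun t j s _ => key t j s, ?_, ?_⟩
  · -- second part
    intro t j
    have h := key t j p
    have hps : ∑ i, p i ^ 2 / p i = 1 := by
      rw [← hp1]
      refine Finset.sum_congr rfl fun i _ => ?_
      rw [sq]
      field_simp
    rwa [hps, Real.sqrt_one, mul_one] at h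
  · -- third part
    intro t
    have hAnn : ∀ i j, 0 ≤ A i j := by
      intro i j
      rw [hA]
      by_cases hij : i = j
      · rw [if_pos hij]; exact hdiag
      · rw [if_neg hij]
        exact div_nonneg (mul_nonneg hβ (hp i).le) hn0.le
    have hpow : ∀ (t : ℕ) (i j : Fin m), 0 ≤ (A ^ t) i j := by
      intro t
      induction t with
      | zero =>
          intro i j
          rw [pow_zero, Matrix.one_apply]
          split <;> norm_num
      | succ t ih =>
          intro i j
          rw [pow_succ, Matrix.mul_apply]
          exact Finset.sum_nonneg fun k _ => mul_nonneg (ih i k) (hAnn k j)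
    have hnn : ∀ j, 0 ≤ ((A ^ t).mulVec p) j := by
      intro j
      simp only [Matrix.mulVec, dotProduct]
      exact Finset.sum_nonneg fun k _ => mul_nonneg (hpow t j k) (hp k).le
    have hDq : Matrix.diagonal q *ᵥ q = p := by
      funext i
      rw [Matrix.mulVec_diagonal, ← hq2 i, sq]
    have hqq : ∑ i, q i ^ 2 = 1 := by
      rw [← hp1]
      exact Finset.sum_congr rfl fun i _ => hq2 i
    calc ∑ j, |((A ^ t).mulVec p) j| = ∑ j, ((A ^ t).mulVec p) j :=
          Finset.sum_congr rfl fun j _ => abs_of_nonneg (hnn j)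
      _ = ∑ j, q j * ((B ^ t) *ᵥ q) j := by
          refine Finset.sum_congr rfl fun j _ => ?_
          rw [← hDq]
          exact hconj t q j
      _ = q ⬝ᵥ ((B ^ t) *ᵥ q) := rfl
      _ ≤ g ^ t * ∑ i, q i ^ 2 := dot_pow_le hBsym habs t q
      _ = g ^ t := by rw [hqq, mul_one]
end

section
/- With A, g, a as above and assuming p₁ ≤ p₂ ≤ … ≤ p_m: for any i < j one has (β pᵢ + 1 - υ) aᵢ = (β pⱼ + 1 - υ) aⱼ where υ = n(1-g), and consequently a₁ ≥ a₂ ≥ … ≥ a_m. -/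
/-- If p₁ ≤ … ≤ p_m, then with υ = n(1-g) one has
(β pᵢ + 1 - υ) aᵢ = (β pⱼ + 1 - υ) aⱼ for i < j, and a is nonincreasing,
where aᵀ is the positive ℓ¹-normalized left Perron eigenvector of A. -/
theorem left_eigenvector_antitone {m n : ℕ} (hn : 1 ≤ n) (p : Fin m → ℝ)
    (hp : ∀ i, 0 < p i) (hp1 : ∑ i, p i = 1) (hp_mono : Monotone p)
    (β : ℝ) (hβ : 0 < β)
    (A : Matrix (Fin m) (Fin m) ℝ)
    (hA : ∀ i j, A i j = if i = j then 1 - 1 / (n : ℝ) else β * p i / n)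
    (g : ℝ) (a : Fin m → ℝ) (ha_pos : ∀ i, 0 < a i) (ha1 : ∑ i, a i = 1)
    (ha : Matrix.vecMul a A = g • a) :
    (∀ i j : Fin m, i < j →
        (β * p i + 1 - (n : ℝ) * (1 - g)) * a i
          = (β * p j + 1 - (n : ℝ) * (1 - g)) * a j) ∧
      Antitone a := by
  have hn0 : (0 : ℝ) < n := by exact_mod_cast hn
  set S : ℝ := ∑ i, a i * p i with hSdef
  have key : ∀ j, (β * p j + 1 - (n : ℝ) * (1 - g)) * a j = β * S := by
    intro j
    have h := congrFun ha j
    simp only [Matrix.vecMul, dotProduct, Pi.smul_apply, smul_eq_mul] at h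
    have hterm : ∀ i, a i * A i j =
        a i * (β * p i / n) +
          (if i = j then a j * (1 - 1 / (n : ℝ)) - a j * (β * p j / n) else 0) := by
      intro i
      rw [hA]
      by_cases hij : i = j
      · subst hij; simp
      · simp [hij]
    rw [Finset.sum_congr rfl fun i _ => hterm i, Finset.sum_add_distrib,
      Finset.sum_ite_eq' Finset.univ j] at h
    simp only [Finset.mem_univ, if_true] at h
    have hS : ∑ i, a i * (β * p i / n) = β * S / n := by
      rw [hSdef, Finset.mul_sum, Finset.sum_div]
      exact Finset.sum_congr rfl fun i _ => by ring
    rw [hS] at h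
    have hne : (n : ℝ) ≠ 0 := ne_of_gt hn0
    field_simp at h
    ring_nf
    ring_nf at h
    linarith
  have hm : 0 < m := by
    rcases Nat.eq_zero_or_pos m with hm | hm
    · subst hm; simp at ha1
    · exact hm
  haveI : Nonempty (Fin m) := Fin.pos_iff_nonempty.mp hm
  have hS0 : 0 < S :=
    Finset.sum_pos (fun i _ => mul_pos (ha_pos i) (hp i)) Finset.univ_nonempty
  have hβS : 0 < β * S := mul_pos hβ hS0
  have hc : ∀ k, 0 < β * p k + 1 - (n : ℝ) * (1 - g) := by
    intro k
    have h1 : β * p k + 1 - (n : ℝ) * (1 - g) = β * S / a k :=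
      (eq_div_iff (ha_pos k).ne').mpr (key k)
    rw [h1]
    exact div_pos hβS (ha_pos k)
  constructor
  · intro i j _
    rw [key i, key j]
  · intro i j hij
    rcases eq_or_lt_of_le hij with h | h
    · rw [h]
    · have h1 : (β * p i + 1 - (n : ℝ) * (1 - g)) * a i
          = (β * p j + 1 - (n : ℝ) * (1 - g)) * a j := by rw [key i, key j]
      have h2 : β * p i + 1 - (n : ℝ) * (1 - g) ≤ β * p j + 1 - (n : ℝ) * (1 - g) := by
        have := hp_mono hij
        nlinarith
      have h3 : (β * p i + 1 - (n : ℝ) * (1 - g)) * a i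
          ≤ (β * p j + 1 - (n : ℝ) * (1 - g)) * a i :=
        mul_le_mul_of_nonneg_right h2 (ha_pos i).le
      exact le_of_mul_le_mul_left (by linarith) (hc j)
end

section
/- Let (W_t)_{t≥0} be a non-negative supermartingale adapted to a filtration (F_t), and τ a stopping time such that W₀ = k, the increments satisfy W_{t+1} - W_t ≤ B for a constant B < ∞, and Var(W_{t+1} | F_t) > σ² > 0 on the event {τ > t}. Then for every u > 4B²/(3σ²), P(τ > u) ≤ 4k/(σ√u). -/
open MeasureTheory

set_option maxHeartbeats 1000000 in
/-- A non-negative supermartingale starting at k with increments bounded by B and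
conditional variance > σ² before the stopping time τ satisfies
P(τ > u) ≤ 4k/(σ√u) for u > 4B²/(3σ²). -/
theorem supermartingale_stopping_time_tail {Ω : Type*} {mΩ : MeasurableSpace Ω}
    {μ : Measure Ω} [IsProbabilityMeasure μ]
    (ℱ : Filtration ℕ mΩ) (W : ℕ → Ω → ℝ) (τ : Ω → ℕ)
    (hW : Supermartingale W ℱ μ) (hW_nonneg : ∀ t ω, 0 ≤ W t ω)
    (hτ : IsStoppingTime ℱ (fun ω => (τ ω : WithTop ℕ)))
    (k B σ : ℝ) (hk : ∀ ω, W 0 ω = k)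
    (hB : ∀ t ω, W (t + 1) ω - W t ω ≤ B)
    (hσ : 0 < σ)
    (hvar : ∀ t : ℕ, ∀ᵐ ω ∂μ, t < τ ω →
      σ ^ 2 < (μ[fun ω' => (W (t + 1) ω' - (μ[W (t + 1)|ℱ t]) ω') ^ 2|ℱ t]) ω) :
    ∀ u : ℝ, 4 * B ^ 2 / (3 * σ ^ 2) < u →
      (μ {ω | u < (τ ω : ℝ)}).toReal ≤ 4 * k / (σ * Real.sqrt u) := by
  intro u hu
  have hΩ : Nonempty Ω := by
    by_contra h
    rw [not_nonempty_iff] at h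
    have h0 : μ Set.univ = 0 := by
      rw [Set.univ_eq_empty_iff.2 h]; simp
    rw [measure_univ] at h0
    exact one_ne_zero h0
  obtain ⟨ω0⟩ := hΩ
  have hk0 : 0 ≤ k := (hk ω0) ▸ hW_nonneg 0 ω0
  have hu0 : 0 < u := lt_of_le_of_lt (by positivity) hu
  set s := Real.sqrt u with hs_def
  have hs : 0 < s := Real.sqrt_pos.2 hu0
  have hss : s ^ 2 = u := Real.sq_sqrt hu0.le
  have ha : 0 < σ * s := by positivity
  by_cases hcase : σ * s ≤ 4 * k
  · have h1 : (μ {ω | u < (τ ω : ℝ)}).toReal ≤ 1 := by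
      have := ENNReal.toReal_mono (measure_ne_top μ Set.univ)
        (measure_mono (Set.subset_univ {ω | u < (τ ω : ℝ)}))
      simpa [measure_univ] using this
    refine h1.trans ?_
    rw [le_div_iff₀ ha]
    linarith
  push_neg at hcase
  set a := σ * s with ha_def
  have hBa : 4 * B ^ 2 < 3 * a ^ 2 := by
    rw [div_lt_iff₀ (by positivity)] at hu
    calc 4 * B ^ 2 < u * (3 * σ ^ 2) := hu
      _ = 3 * a ^ 2 := by rw [ha_def, mul_pow, ← hss]; ring
  set lam := max B (3 * a / 4) with hlam_def
  have hlam_pos : 0 < lam := lt_of_lt_of_le (by positivity) (le_max_right _ _)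
  have hBlam : B ≤ lam := le_max_left _ _
  have hklam : k < lam := lt_of_lt_of_le (by linarith) (le_max_right _ _)
  set n := ⌈u⌉₊ with hn_def
  have hun : u ≤ n := Nat.le_ceil u
  -- boundedness of W
  set Bp := max B 0 with hBp_def
  have hBp0 : 0 ≤ Bp := le_max_right _ _
  have hWub : ∀ t ω, W t ω ≤ k + t * Bp := by
    intro t
    induction t with
    | zero => intro ω; simp [hk ω]
    | succ t ih =>
      intro ω
      have h1 := hB t ω
      have h2 := ih ω
      have h3 : B ≤ Bp := le_max_left _ _
      push_cast
      nlinarith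
  have hWsm : ∀ t, StronglyMeasurable (W t) := fun t => (hW.stronglyAdapted t).mono (ℱ.le t)
  have hbdd : ∀ (f : Ω → ℝ) (C : ℝ), AEStronglyMeasurable f μ → (∀ ω, |f ω| ≤ C) →
      Integrable f μ := fun f C hm hC =>
    Integrable.mono' (integrable_const C) hm (ae_of_all _ fun ω => by
      simpa [Real.norm_eq_abs] using hC ω)
  -- the hitting time
  set π : Ω → ℕ := hittingBtwn W (Set.Ici lam) 0 n with hπ_def
  have hπ_st : IsStoppingTime ℱ (fun ω => (π ω : WithTop ℕ)) :=
    hW.stronglyAdapted.adapted.isStoppingTime_hittingBtwn measurableSet_Ici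
  have hπ_le : ∀ ω, π ω ≤ n := fun ω => hittingBtwn_le ω
  set ρ : Ω → ℕ := fun ω => min (τ ω) (π ω) with hρ_def
  have hρ_st : IsStoppingTime ℱ (fun ω => (ρ ω : WithTop ℕ)) := hτ.min hπ_st
  have hWlt : ∀ t ω, t < π ω → W t ω < lam := by
    intro t ω h
    have := notMem_of_lt_hittingBtwn h (Nat.zero_le t)
    simpa [Set.mem_Ici, not_le] using this
  -- the two events
  set G : Set Ω := {ω | n ≤ τ ω ∧ ∀ j < n, W j ω < lam} with hG_def
  set H : Set Ω := {ω | ∃ j < n, lam ≤ W j ω} with hH_def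
  have hGmeas : MeasurableSet G := by
    have h1 : MeasurableSet {ω | n ≤ τ ω} := by
      have := ℱ.le n _ (hτ.measurableSet_ge n)
      simpa using this
    have h2 : MeasurableSet {ω | ∀ j < n, W j ω < lam} := by
      have he : {ω | ∀ j < n, W j ω < lam} = ⋂ j, ⋂ (_ : j < n), {ω | W j ω < lam} := by
        ext ω; simp
      rw [he]
      exact MeasurableSet.iInter fun j => MeasurableSet.iInter fun _ =>
        measurableSet_lt (hWsm j).measurable measurable_const
    exact h1.inter h2
  have hHmeas : MeasurableSet H := by
    have he : H = ⋃ j, ⋃ (_ : j < n), {ω | lam ≤ W j ω} := by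
      ext ω; simp [hH_def]
    rw [he]
    exact MeasurableSet.iUnion fun j => MeasurableSet.iUnion fun _ =>
      measurableSet_le measurable_const (hWsm j).measurable
  have hsub : {ω | u < (τ ω : ℝ)} ⊆ H ∪ G := by
    intro ω hω
    have hn_le : n ≤ τ ω := Nat.ceil_le.2 (le_of_lt hω)
    by_cases hH' : ∃ j < n, lam ≤ W j ω
    · exact Or.inl hH'
    · push_neg at hH'
      exact Or.inr ⟨hn_le, hH'⟩
  -- Part A : μ H ≤ k / lam
  have hA : (μ H).toReal ≤ k / lam := by
    set sv : Ω → ℝ := stoppedValue W (fun ω => (π ω : WithTop ℕ)) with hsv_def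
    have hsv_sm : StronglyMeasurable sv :=
      (stronglyMeasurable_stoppedValue_of_le hW.stronglyAdapted.progMeasurable_of_discrete hπ_st
        (fun ω => by simpa using hπ_le ω)).mono (ℱ.le n)
    have hsv_nonneg : ∀ ω, 0 ≤ sv ω := fun ω => hW_nonneg _ ω
    have hsv_bd : ∀ ω, |sv ω| ≤ k + n * Bp := by
      intro ω
      rw [abs_of_nonneg (hsv_nonneg ω)]
      calc sv ω ≤ k + (π ω) * Bp := hWub (π ω) ω
        _ ≤ k + n * Bp := by
          have h1 : (π ω : ℝ) ≤ n := by exact_mod_cast hπ_le ω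
          nlinarith
    have hsv_int : Integrable sv μ := hbdd _ _ hsv_sm.aestronglyMeasurable hsv_bd
    have hOS : ∫ ω, sv ω ∂μ ≤ k := by
      have h1 := hW.neg.expected_stoppedValue_mono (isStoppingTime_const ℱ 0) hπ_st
        (fun ω => WithTop.coe_le_coe.2 (Nat.zero_le _)) (N := n) (fun ω => WithTop.coe_le_coe.2 (hπ_le ω))
      have h2 : stoppedValue (-W) (fun _ => WithTop.some (0 : ℕ)) = fun (_ : Ω) => -k := by
        funext ω; simp [stoppedValue, hk ω]
      have h3 : stoppedValue (-W) (fun ω => (π ω : WithTop ℕ)) = fun ω => - sv ω := by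
        funext ω; simp [stoppedValue, hsv_def]
      rw [h2, h3] at h1
      have h4 : ∫ (x : Ω), -sv x ∂μ = - ∫ x, sv x ∂μ := integral_neg _
      rw [h4] at h1
      simp only [integral_const, probReal_univ, smul_eq_mul, one_mul] at h1
      linarith
    have hHlam : ∀ ω ∈ H, lam ≤ sv ω := by
      intro ω hω
      obtain ⟨j, hj, hwj⟩ := hω
      exact hittingBtwn_mem_set (u := W) (s := Set.Ici lam) (n := 0) (m := n) (ω := ω)
        ⟨j, ⟨Nat.zero_le _, hj.le⟩, hwj⟩
    have h5 : (μ H).toReal * lam ≤ k := by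
      have hc : ∫ _ω in H, lam ∂μ ≤ ∫ ω in H, sv ω ∂μ :=
        setIntegral_mono_on (integrable_const lam).integrableOn hsv_int.integrableOn hHmeas hHlam
      rw [setIntegral_const, smul_eq_mul, measureReal_def] at hc
      have h6 : ∫ ω in H, sv ω ∂μ ≤ ∫ ω, sv ω ∂μ :=
        setIntegral_le_integral hsv_int (ae_of_all _ hsv_nonneg)
      linarith
    rw [le_div_iff₀ hlam_pos]
    exact h5
  -- Part B : μ G ≤ 2 k lam / (σ² u)
  have hG2 : σ ^ 2 * ((μ G).toReal * n) ≤ 2 * k * lam := by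
    set Z : ℕ → Ω → ℝ := stoppedProcess W (fun ω => (ρ ω : WithTop ℕ)) with hZ_def
    have hZ_eq : ∀ t ω, Z t ω = W (min t (ρ ω)) ω := fun t ω => rfl
    have hZ_sm : ∀ t, StronglyMeasurable (Z t) := fun t =>
      ((hW.stronglyAdapted.stoppedProcess_of_discrete hρ_st) t).mono (ℱ.le t)
    have hZ_nonneg : ∀ t ω, 0 ≤ Z t ω := fun t ω => hW_nonneg _ _
    have hZ_ub : ∀ t ω, Z t ω ≤ k + t * Bp := by
      intro t ω
      calc Z t ω ≤ k + (min t (ρ ω) : ℕ) * Bp := hWub _ ω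
        _ ≤ k + t * Bp := by
          have h1 : ((min t (ρ ω) : ℕ) : ℝ) ≤ t := by exact_mod_cast min_le_left _ _
          nlinarith
    have hint_sqZ : ∀ t, Integrable (fun ω => (lam - Z t ω) ^ 2) μ := by
      intro t
      refine hbdd _ ((lam + (k + t * Bp)) ^ 2) ?_ ?_
      · exact ((measurable_const.sub (hZ_sm t).measurable).pow_const 2).aestronglyMeasurable
      · intro ω
        have h1 := hZ_nonneg t ω
        have h2 := hZ_ub t ω
        have h3 : 0 ≤ k + (t : ℝ) * Bp := le_trans h1 h2
        rw [abs_of_nonneg (sq_nonneg _)]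
        nlinarith
    have hint_sqW : ∀ t, Integrable (fun ω => (lam - W t ω) ^ 2) μ := by
      intro t
      refine hbdd _ ((lam + (k + t * Bp)) ^ 2) ?_ ?_
      · exact ((measurable_const.sub (hWsm t).measurable).pow_const 2).aestronglyMeasurable
      · intro ω
        have h1 := hW_nonneg t ω
        have h2 := hWub t ω
        have h3 : 0 ≤ k + (t : ℝ) * Bp := le_trans h1 h2
        rw [abs_of_nonneg (sq_nonneg _)]
        nlinarith
    have hcond : ∀ t, ∀ᵐ ω ∂μ, t < ρ ω →
        (lam - W t ω) ^ 2 + σ ^ 2 ≤ (μ[fun ω' => (lam - W (t+1) ω') ^ 2|ℱ t]) ω := by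
      intro t
      have hvt := hvar t
      have hWcle := hW.condExp_ae_le (Nat.le_succ t)
      set m : Ω → ℝ := μ[W (t+1)|ℱ t] with hm_def
      set C : ℝ := k + ((t+1 : ℕ) : ℝ) * Bp with hC_def
      have hC0 : 0 ≤ C := le_trans (hW_nonneg (t+1) ω0) (by exact_mod_cast hWub (t+1) ω0)
      have hVbd : ∀ ω, |W (t+1) ω| ≤ C := fun ω => by
        rw [abs_of_nonneg (hW_nonneg _ ω)]
        exact_mod_cast hWub _ ω
      have hm_sm : StronglyMeasurable[ℱ t] m := stronglyMeasurable_condExp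
      have hm_sm' : StronglyMeasurable m := hm_sm.mono (ℱ.le t)
      have hm_int : Integrable m μ := integrable_condExp
      have hm_nonneg : 0 ≤ᵐ[μ] m := condExp_nonneg (ae_of_all _ (hW_nonneg (t+1)))
      have hm_leC : ∀ᵐ ω ∂μ, m ω ≤ C := by
        have h1 : μ[W (t+1)|ℱ t] ≤ᵐ[μ] μ[(fun _ => C)|ℱ t] :=
          condExp_mono (hW.integrable _) (integrable_const C)
            (ae_of_all _ fun ω => (abs_le.1 (hVbd ω)).2)
        rw [condExp_const (ℱ.le t) C] at h1
        exact h1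
      have hm_bd : ∀ᵐ ω ∂μ, |m ω| ≤ C := by
        filter_upwards [hm_nonneg, hm_leC] with ω h1 h2
        rw [abs_of_nonneg h1]; exact h2
      have hsm_lm : StronglyMeasurable[ℱ t] (fun ω => lam - m ω) :=
        stronglyMeasurable_const.sub hm_sm
      have hint_lm2 : Integrable (fun ω => (lam - m ω) ^ 2) μ := by
        refine Integrable.mono' (integrable_const ((lam + C) ^ 2))
          ((measurable_const.sub hm_sm'.measurable).pow_const 2).aestronglyMeasurable ?_
        filter_upwards [hm_nonneg, hm_leC] with ω h1 h2
        simp only [Pi.zero_apply] at h1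
        rw [Real.norm_eq_abs, abs_of_nonneg (sq_nonneg _)]
        nlinarith [mul_nonneg (by linarith : (0:ℝ) ≤ C + m ω)
          (by linarith : (0:ℝ) ≤ 2 * lam + C - m ω)]
      have hint_sub : Integrable (fun ω => W (t+1) ω - m ω) μ := (hW.integrable _).sub hm_int
      have hint_cross : Integrable (fun ω => (lam - m ω) * (W (t+1) ω - m ω)) μ := by
        refine Integrable.bdd_mul (c := |lam| + C) hint_sub
          (measurable_const.sub hm_sm'.measurable).aestronglyMeasurable ?_
        filter_upwards [hm_bd] with ω h1
        rw [Real.norm_eq_abs]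
        have := abs_sub (lam) (m ω)
        calc |lam - m ω| ≤ |lam| + |m ω| := abs_sub _ _
          _ ≤ |lam| + C := by linarith
      have hint_var : Integrable (fun ω => (W (t+1) ω - m ω) ^ 2) μ := by
        refine Integrable.mono' (integrable_const ((2 * C) ^ 2))
          (((hWsm (t+1)).measurable.sub hm_sm'.measurable).pow_const 2).aestronglyMeasurable ?_
        filter_upwards [hm_bd] with ω h1
        rw [Real.norm_eq_abs, abs_of_nonneg (sq_nonneg _)]
        have h2 := abs_le.1 h1
        have h3 := abs_le.1 (hVbd ω)
        nlinarith
      -- decompose the conditional expectation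
      set f1 : Ω → ℝ := fun ω => (lam - m ω) ^ 2 - 2 * ((lam - m ω) * (W (t+1) ω - m ω))
        with hf1_def
      set f2 : Ω → ℝ := fun ω => (W (t+1) ω - m ω) ^ 2 with hf2_def
      have hint_f1 : Integrable f1 μ := hint_lm2.sub (hint_cross.const_mul 2)
      have h_split : μ[fun ω' => (lam - W (t+1) ω') ^ 2|ℱ t] =ᵐ[μ] μ[f1|ℱ t] + μ[f2|ℱ t] := by
        have he : (fun ω' => (lam - W (t+1) ω') ^ 2) = f1 + f2 := by
          funext ω; simp only [hf1_def, hf2_def, Pi.add_apply]; ring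
        rw [he]
        exact condExp_add hint_f1 hint_var _
      have h_f1 : μ[f1|ℱ t] =ᵐ[μ] fun ω => (lam - m ω) ^ 2 := by
        have he : f1 = (fun ω => (lam - m ω) ^ 2) +
            ((-2 : ℝ) • fun ω => (lam - m ω) * (W (t+1) ω - m ω)) := by
          funext ω; simp only [hf1_def, Pi.add_apply, Pi.smul_apply, smul_eq_mul]; ring
        have h1 : μ[f1|ℱ t] =ᵐ[μ] μ[fun ω => (lam - m ω) ^ 2|ℱ t] +
            μ[(-2 : ℝ) • fun ω => (lam - m ω) * (W (t+1) ω - m ω)|ℱ t] := by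
          rw [he]
          exact condExp_add hint_lm2 ((hint_cross.smul (-2 : ℝ))) _
        have h2 : μ[fun ω => (lam - m ω) ^ 2|ℱ t] = fun ω => (lam - m ω) ^ 2 := by
          refine condExp_of_stronglyMeasurable (ℱ.le t) ?_ hint_lm2
          have : (fun ω => (lam - m ω) ^ 2) = fun ω => (lam - m ω) * (lam - m ω) := by
            funext ω; ring
          rw [this]
          exact hsm_lm.mul hsm_lm
        have h3 : μ[(-2 : ℝ) • fun ω => (lam - m ω) * (W (t+1) ω - m ω)|ℱ t] =ᵐ[μ]
            (-2 : ℝ) • μ[fun ω => (lam - m ω) * (W (t+1) ω - m ω)|ℱ t] :=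
          condExp_smul (-2 : ℝ) _ _
        have h4 : μ[fun ω => (lam - m ω) * (W (t+1) ω - m ω)|ℱ t] =ᵐ[μ]
            (fun ω => lam - m ω) * μ[fun ω => W (t+1) ω - m ω|ℱ t] :=
          condExp_mul_of_stronglyMeasurable_left hsm_lm hint_cross hint_sub
        have h5 : μ[fun ω => W (t+1) ω - m ω|ℱ t] =ᵐ[μ] 0 := by
          have h6 : μ[fun ω => W (t+1) ω - m ω|ℱ t] =ᵐ[μ] μ[W (t+1)|ℱ t] - μ[m|ℱ t] :=
            condExp_sub (hW.integrable _) hm_int _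
          have h7 : μ[m|ℱ t] = m := condExp_of_stronglyMeasurable (ℱ.le t) hm_sm hm_int
          filter_upwards [h6] with ω h8
          simp only [Pi.zero_apply, h8, Pi.sub_apply, h7, ← hm_def, sub_self]
        filter_upwards [h1, h3, h4, h5] with ω hω1 hω3 hω4 hω5
        rw [hω1]
        simp only [Pi.add_apply, Pi.smul_apply, smul_eq_mul, hω3, hω4, Pi.mul_apply, hω5,
          Pi.zero_apply, h2]
        ring
      filter_upwards [hvt, h_split, h_f1, hm_nonneg, hWcle] with ω hvarω hsplitω hf1ω h0m hmle
      intro hρt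
      have hτt : t < τ ω := lt_of_lt_of_le hρt (min_le_left _ _)
      have hπt : t < π ω := lt_of_lt_of_le hρt (min_le_right _ _)
      have hWtlam := hWlt t ω hπt
      have hv := hvarω hτt
      have hsq : (lam - W t ω) ^ 2 ≤ (lam - m ω) ^ 2 := by nlinarith
      have : (μ[fun ω' => (lam - W (t+1) ω') ^ 2|ℱ t]) ω =
          (lam - m ω) ^ 2 + (μ[f2|ℱ t]) ω := by
        rw [hsplitω]; simp only [Pi.add_apply, hf1ω]
      rw [this]
      have hveq : (μ[f2|ℱ t]) ω = (μ[fun ω' => (W (t + 1) ω' - m ω') ^ 2|ℱ t]) ω := rfl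
      linarith [hv, hsq, hveq ▸ hv]
    have hstep : ∀ t, t < n → ∫ ω, (lam - Z t ω) ^ 2 ∂μ + σ ^ 2 * (μ G).toReal ≤
        ∫ ω, (lam - Z (t+1) ω) ^ 2 ∂μ := by
      intro t htn
      set E : Set Ω := {ω | t < ρ ω} with hE_def
      have hEf : MeasurableSet[ℱ t] E := by
        have he : E = {ω | ρ ω ≤ t}ᶜ := by
          ext ω; simp [hE_def, not_le]
        rw [he]
        simpa using (hρ_st t).compl
      have hEmeas : MeasurableSet E := ℱ.le t E hEf
      have hGE : G ⊆ E := by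
        intro ω hω
        obtain ⟨h1, h2⟩ := hω
        have hπn : n ≤ π ω := by
          by_contra hlt
          push_neg at hlt
          have h3 : W (π ω) ω ∈ Set.Ici lam := hittingBtwn_mem_set_of_hittingBtwn_lt hlt
          exact absurd h3 (not_le.2 (h2 _ hlt))
        show t < ρ ω
        exact lt_min (lt_of_lt_of_le htn h1) (lt_of_lt_of_le htn hπn)
      have hμGE : (μ G).toReal ≤ (μ E).toReal :=
        ENNReal.toReal_mono (measure_ne_top μ E) (measure_mono hGE)
      have hpt : ∀ ω, (lam - Z (t+1) ω) ^ 2 = (lam - Z t ω) ^ 2 +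
          E.indicator (fun ω' => (lam - W (t+1) ω') ^ 2 - (lam - W t ω') ^ 2) ω := by
        intro ω
        by_cases hω : t < ρ ω
        · have h1 : min (t+1) (ρ ω) = t+1 := min_eq_left (by omega)
          have h2 : min t (ρ ω) = t := min_eq_left (by omega)
          rw [Set.indicator_of_mem (by exact hω : ω ∈ E)]
          rw [hZ_eq, hZ_eq, h1, h2]
          ring
        · have h0 : ρ ω ≤ t := not_lt.1 hω
          have h1 : min (t+1) (ρ ω) = ρ ω := min_eq_right (by omega)
          have h2 : min t (ρ ω) = ρ ω := min_eq_right h0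
          rw [Set.indicator_of_notMem (by exact hω : ω ∉ E)]
          rw [hZ_eq, hZ_eq, h1, h2]
          ring
      have hI : ∫ ω, (lam - Z (t+1) ω) ^ 2 ∂μ = ∫ ω, (lam - Z t ω) ^ 2 ∂μ +
          ∫ ω in E, ((lam - W (t+1) ω) ^ 2 - (lam - W t ω) ^ 2) ∂μ := by
        have h1 : (fun ω => (lam - Z (t+1) ω) ^ 2) = fun ω => (lam - Z t ω) ^ 2 +
            E.indicator (fun ω' => (lam - W (t+1) ω') ^ 2 - (lam - W t ω') ^ 2) ω :=
          funext hpt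
        have h2 : ∫ ω, ((lam - Z t ω) ^ 2 +
            E.indicator (fun ω' => (lam - W (t+1) ω') ^ 2 - (lam - W t ω') ^ 2) ω) ∂μ =
            (∫ ω, (lam - Z t ω) ^ 2 ∂μ) +
            ∫ ω, E.indicator (fun ω' => (lam - W (t+1) ω') ^ 2 - (lam - W t ω') ^ 2) ω ∂μ :=
          integral_add (hint_sqZ t) (((hint_sqW (t+1)).sub (hint_sqW t)).indicator hEmeas)
        rw [h1, h2, integral_indicator hEmeas]
      have hIE : ∫ ω in E, ((lam - W (t+1) ω) ^ 2 - (lam - W t ω) ^ 2) ∂μ =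
          ∫ ω in E, (lam - W (t+1) ω) ^ 2 ∂μ - ∫ ω in E, (lam - W t ω) ^ 2 ∂μ :=
        integral_sub ((hint_sqW (t+1)).integrableOn) ((hint_sqW t).integrableOn)
      have hCE : ∫ ω in E, (lam - W (t+1) ω) ^ 2 ∂μ =
          ∫ ω in E, (μ[fun ω' => (lam - W (t+1) ω') ^ 2|ℱ t]) ω ∂μ :=
        (setIntegral_condExp (ℱ.le t) (hint_sqW (t+1)) hEf).symm
      have hmono : ∫ ω in E, ((lam - W t ω) ^ 2 + σ ^ 2) ∂μ ≤
          ∫ ω in E, (μ[fun ω' => (lam - W (t+1) ω') ^ 2|ℱ t]) ω ∂μ := by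
        refine setIntegral_mono_on_ae ?_ ?_ hEmeas ?_
        · exact ((hint_sqW t).add (integrable_const _)).integrableOn
        · exact integrable_condExp.integrableOn
        · filter_upwards [hcond t] with ω h1
          intro hωE
          exact h1 hωE
      have hconst : ∫ ω in E, ((lam - W t ω) ^ 2 + σ ^ 2) ∂μ =
          ∫ ω in E, (lam - W t ω) ^ 2 ∂μ + σ ^ 2 * (μ E).toReal := by
        rw [integral_add ((hint_sqW t).integrableOn) (integrable_const _)]
        rw [setIntegral_const, smul_eq_mul, measureReal_def]
        ring
      have hσ2 : 0 ≤ σ ^ 2 := sq_nonneg σ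
      rw [hI, hIE]
      have h9 := mul_le_mul_of_nonneg_left hμGE hσ2
      linarith
    have hind : ∀ t, t ≤ n → (lam - k) ^ 2 + σ ^ 2 * ((μ G).toReal * t) ≤
        ∫ ω, (lam - Z t ω) ^ 2 ∂μ := by
      intro t
      induction t with
      | zero =>
        intro _
        have h0 : (fun ω => (lam - Z 0 ω) ^ 2) = fun _ => (lam - k) ^ 2 := by
          funext ω
          rw [hZ_eq]
          simp [hk ω]
        rw [h0]
        simp [measure_univ]
      | succ t ih =>
        intro h
        have h1 := ih (le_of_lt (Nat.lt_of_succ_le h))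
        have h2 := hstep t (Nat.lt_of_succ_le h)
        push_cast
        push_cast at h1
        nlinarith
    have hZb : ∀ ω, Z n ω ≤ 2 * lam := by
      intro ω
      rcases hmin : min n (ρ ω) with _ | i
      · rw [hZ_eq, hmin, hk ω]; linarith
      · have h1 : i + 1 ≤ ρ ω := le_trans (le_of_eq hmin.symm) (min_le_right _ _)
        have h2 : i < π ω :=
          lt_of_lt_of_le (Nat.lt_of_succ_le h1) (min_le_right (τ ω) (π ω))
        have h3 := hWlt i ω h2
        have h4 := hB i ω
        rw [hZ_eq, hmin]
        linarith
    have hup : ∫ ω, (lam - Z n ω) ^ 2 ∂μ ≤ lam ^ 2 := by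
      have hptw : ∀ ω, (lam - Z n ω) ^ 2 ≤ lam ^ 2 := by
        intro ω
        have h1 := hZ_nonneg n ω
        have h2 := hZb ω
        nlinarith
      calc ∫ ω, (lam - Z n ω) ^ 2 ∂μ ≤ ∫ _ω, lam ^ 2 ∂μ :=
          integral_mono (hint_sqZ n) (integrable_const _) hptw
        _ = lam ^ 2 := by simp [measure_univ]
    have h7 := hind n le_rfl
    nlinarith [sq_nonneg k]
  -- conclude
  have hμG0 : 0 ≤ (μ G).toReal := ENNReal.toReal_nonneg
  have hGbound : (μ G).toReal ≤ 2 * k * lam / (σ ^ 2 * u) := by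
    rw [le_div_iff₀ (by positivity)]
    have hun' : σ ^ 2 * ((μ G).toReal * u) ≤ σ ^ 2 * ((μ G).toReal * n) := by
      have h1 : (μ G).toReal * u ≤ (μ G).toReal * n := by nlinarith
      nlinarith [sq_nonneg σ]
    nlinarith
  have hμHG : (μ {ω | u < (τ ω : ℝ)}).toReal ≤ (μ H).toReal + (μ G).toReal := by
    have h1 : μ {ω | u < (τ ω : ℝ)} ≤ μ H + μ G :=
      le_trans (measure_mono hsub) (measure_union_le H G)
    have h2 := ENNReal.toReal_mono (by
      exact ENNReal.add_ne_top.2 ⟨measure_ne_top μ H, measure_ne_top μ G⟩) h1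
    rwa [ENNReal.toReal_add (measure_ne_top μ H) (measure_ne_top μ G)] at h2
  have hfinal : k / lam + 2 * k * lam / (σ ^ 2 * u) ≤ 4 * k / (σ * s) := by
    have hσu : σ ^ 2 * u = a ^ 2 := by rw [ha_def, mul_pow, ← hss]
    rw [hσu]
    have hscalar : 1 / lam + 2 * lam / a ^ 2 ≤ 4 / a := by
      rw [div_add_div _ _ (ne_of_gt hlam_pos) (by positivity),
        div_le_div_iff₀ (by positivity) (by positivity)]
      rcases max_cases B (3 * a / 4) with ⟨hlam_eq, hc⟩ | ⟨hlam_eq, hc⟩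
      · rw [hlam_def, hlam_eq]
        nlinarith [mul_pos ha (lt_of_lt_of_le (by positivity : (0:ℝ) < 3 * a / 4) hc),
          mul_pos (mul_pos ha ha) ha, mul_le_mul_of_nonneg_left hc ha.le]
      · rw [hlam_def, hlam_eq]
        nlinarith [mul_pos (mul_pos ha ha) ha]
    calc k / lam + 2 * k * lam / a ^ 2 = k * (1 / lam + 2 * lam / a ^ 2) := by ring
      _ ≤ k * (4 / a) := by
        have := mul_le_mul_of_nonneg_left hscalar hk0
        linarith
      _ = 4 * k / (σ * s) := by rw [← ha_def]; ring
  calc (μ {ω | u < (τ ω : ℝ)}).toReal ≤ (μ H).toReal + (μ G).toReal := hμHG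
    _ ≤ k / lam + 2 * k * lam / (σ ^ 2 * u) := add_le_add hA hGbound
    _ ≤ 4 * k / (σ * s) := hfinal
end

section
/- Let (Z_t)_{t≥0} be a Markov chain on a finite state space S̃ ⊆ ℝ^m. Suppose there exists 0 < r < 1 such that for all θ, θ' ∈ S̃ and all t, ‖E_θ[Z_t] - E_{θ'}[Z_t]‖₁ ≤ rᵗ ‖θ - θ'‖₁. Then sup_{θ} Var_θ(Z_t) ≤ m · (sup_θ Var_θ(Z₁)) · min{t, (1 - r²)^{-1}}, where Var denotes the ℓ²-variance Var_θ(Z_t) = E_θ‖Z_t - E_θ Z_t‖₂². -/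
set_option linter.unusedSectionVars false
set_option linter.unusedVariables false
set_option linter.deprecated false


/-- Expectation of the chain at time t started at θ: E_θ[Z_t] ∈ ℝ^m, where the chain on a
finite state space α with transition matrix P is observed through the embedding ι : α → ℝ^m. -/
noncomputable def chainExp {α : Type*} [Fintype α] [DecidableEq α] {m : ℕ} (P : Matrix α α ℝ)
    (ι : α → Fin m → ℝ) (t : ℕ) (θ : α) : Fin m → ℝ :=
  fun i => ∑ x, (P ^ t) θ x * ι x i

/-- The ℓ²-variance Var_θ(Z_t) = E_θ‖Z_t - E_θ Z_t‖₂². -/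
noncomputable def chainVar {α : Type*} [Fintype α] [DecidableEq α] {m : ℕ} (P : Matrix α α ℝ)
    (ι : α → Fin m → ℝ) (t : ℕ) (θ : α) : ℝ :=
  ∑ x, (P ^ t) θ x * ∑ i, (ι x i - chainExp P ι t θ i) ^ 2

section helpers
variable {α : Type*} [Fintype α] [DecidableEq α] {m : ℕ}

lemma pow_entry_nonneg (P : Matrix α α ℝ) (hP : ∀ x y, 0 ≤ P x y) (t : ℕ) :
    ∀ x y, 0 ≤ (P ^ t) x y := by
  induction t with
  | zero => intro x y; simp [Matrix.one_apply]; split <;> norm_num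
  | succ t ih =>
    intro x y
    rw [pow_succ, Matrix.mul_apply]
    exact Finset.sum_nonneg fun z _ => mul_nonneg (ih x z) (hP z y)

lemma pow_row_sum (P : Matrix α α ℝ) (hP : ∀ x, ∑ y, P x y = 1) (t : ℕ) :
    ∀ x, ∑ y, (P ^ t) x y = 1 := by
  induction t with
  | zero => intro x; simp [Matrix.one_apply]
  | succ t ih =>
    intro x
    simp_rw [pow_succ, Matrix.mul_apply]
    rw [Finset.sum_comm]
    simp_rw [← Finset.mul_sum, hP, mul_one]
    exact ih x

lemma wsum_sub_sq (p g : α → ℝ) (hp1 : ∑ y, p y = 1) (c : ℝ) :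
    ∑ x, p x * (g x - c) ^ 2
      = (∑ x, p x * g x ^ 2) - 2 * c * (∑ x, p x * g x) + c ^ 2 := by
  have h : ∀ x, p x * (g x - c) ^ 2
      = p x * g x ^ 2 - 2 * c * (p x * g x) + c ^ 2 * p x := fun x => by ring
  simp_rw [h]
  rw [Finset.sum_add_distrib, Finset.sum_sub_distrib, ← Finset.mul_sum, ← Finset.mul_sum, hp1]
  ring

lemma pair_id (p g : α → ℝ) (hp1 : ∑ y, p y = 1) :
    ∑ y, ∑ z, p y * p z * (g y - g z) ^ 2
      = 2 * ((∑ x, p x * g x ^ 2) - (∑ x, p x * g x) ^ 2) := by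
  have h : ∀ y z, p y * p z * (g y - g z) ^ 2
      = p y * (p z * g z ^ 2) + (p y * g y ^ 2) * p z
        - 2 * ((p y * g y) * (p z * g z)) := fun y z => by ring
  simp_rw [h, Finset.sum_sub_distrib, Finset.sum_add_distrib, ← Finset.mul_sum,
    ← Finset.sum_mul, hp1]
  ring

end helpers

section main
variable {α : Type*} [Fintype α] [DecidableEq α] {m : ℕ}

lemma exp_succ (P : Matrix α α ℝ) (ι : α → Fin m → ℝ) (t : ℕ) (θ : α) (i : Fin m) :
    chainExp P ι (t + 1) θ i = ∑ y, P θ y * chainExp P ι t y i := by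
  have hPow : P ^ (t + 1) = P * P ^ t := pow_succ' P t
  simp only [chainExp, hPow, Matrix.mul_apply, Finset.sum_mul]
  rw [Finset.sum_comm]
  simp_rw [mul_assoc, ← Finset.mul_sum]

lemma var_S2 (P : Matrix α α ℝ) (hrow : ∀ t x, ∑ y, (P ^ t) x y = 1)
    (ι : α → Fin m → ℝ) (t : ℕ) (y : α) :
    chainVar P ι t y
      = ∑ i, ((∑ x, (P ^ t) y x * ι x i ^ 2) - chainExp P ι t y i ^ 2) := by
  rw [chainVar]
  simp_rw [Finset.mul_sum]
  rw [Finset.sum_comm]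
  refine Finset.sum_congr rfl fun i _ => ?_
  rw [wsum_sub_sq _ _ (hrow t y)]
  have h : (∑ x, (P ^ t) y x * ι x i) = chainExp P ι t y i := rfl
  rw [h]; ring

lemma var_succ (P : Matrix α α ℝ) (hP_row : ∀ x, ∑ y, P x y = 1)
    (hrow : ∀ t x, ∑ y, (P ^ t) x y = 1) (ι : α → Fin m → ℝ) (t : ℕ) (θ : α) :
    chainVar P ι (t + 1) θ = ∑ y, P θ y * chainVar P ι t y
      + (1/2) * ∑ y, ∑ z, P θ y * P θ z *
          ∑ i, (chainExp P ι t y i - chainExp P ι t z i) ^ 2 := by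
  have hμ := exp_succ P ι t θ
  -- per-coordinate pair identity
  have key : ∀ i : Fin m, ∑ y, ∑ z, P θ y * P θ z *
      (chainExp P ι t y i - chainExp P ι t z i) ^ 2
      = 2 * ∑ y, P θ y * (chainExp P ι t y i - chainExp P ι (t+1) θ i) ^ 2 := by
    intro i
    rw [pair_id (P θ) (fun y => chainExp P ι t y i) (hP_row θ),
      wsum_sub_sq (P θ) (fun y => chainExp P ι t y i) (hP_row θ), hμ i]
    ring
  -- decompose the variance
  have hPow : P ^ (t + 1) = P * P ^ t := pow_succ' P t
  rw [chainVar]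
  simp_rw [hPow, Matrix.mul_apply, Finset.sum_mul]
  rw [Finset.sum_comm]
  simp_rw [mul_assoc, ← Finset.mul_sum]
  have hA : ∀ y, (∑ x, (P ^ t) y x * ∑ i, (ι x i - chainExp P ι (t+1) θ i) ^ 2)
      = chainVar P ι t y + ∑ i, (chainExp P ι t y i - chainExp P ι (t+1) θ i) ^ 2 := by
    intro y
    rw [var_S2 P hrow ι t y]
    simp_rw [Finset.mul_sum]
    rw [Finset.sum_comm, ← Finset.sum_add_distrib]
    refine Finset.sum_congr rfl fun i _ => ?_
    rw [wsum_sub_sq _ _ (hrow t y)]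
    have h : (∑ x, (P ^ t) y x * ι x i) = chainExp P ι t y i := rfl
    rw [h]; ring
  simp_rw [hA, mul_add, Finset.sum_add_distrib]
  congr 1
  -- second term
  have swap3 : ∑ y, ∑ z, P θ y * P θ z *
        ∑ i, (chainExp P ι t y i - chainExp P ι t z i) ^ 2
      = ∑ i, ∑ y, ∑ z, P θ y * P θ z *
        (chainExp P ι t y i - chainExp P ι t z i) ^ 2 := by
    simp_rw [Finset.mul_sum]
    exact (Finset.sum_congr rfl fun y _ => Finset.sum_comm).trans Finset.sum_comm
  calc ∑ y, P θ y * ∑ i, (chainExp P ι t y i - chainExp P ι (t+1) θ i) ^ 2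
      = ∑ i, ∑ y, P θ y * (chainExp P ι t y i - chainExp P ι (t+1) θ i) ^ 2 := by
        simp_rw [Finset.mul_sum]; exact Finset.sum_comm
    _ = ∑ i, 1/2 * ∑ y, ∑ z, P θ y * P θ z *
          (chainExp P ι t y i - chainExp P ι t z i) ^ 2 := by
        refine Finset.sum_congr rfl fun i _ => ?_
        rw [key i]; ring
    _ = 1/2 * ∑ y, ∑ z, P θ y * P θ z *
          ∑ i, (chainExp P ι t y i - chainExp P ι t z i) ^ 2 := by
        rw [← Finset.mul_sum, ← swap3]
    _ = 1/2 * ∑ y, P θ y * ∑ z, P θ z *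
          ∑ i, (chainExp P ι t y i - chainExp P ι t z i) ^ 2 := by
        simp_rw [mul_assoc, ← Finset.mul_sum]

end main

lemma exp_zero {α : Type*} [Fintype α] [DecidableEq α] {m : ℕ} (P : Matrix α α ℝ)
    (ι : α → Fin m → ℝ) (θ : α) (i : Fin m) : chainExp P ι 0 θ i = ι θ i := by
  simp [chainExp, Matrix.one_apply]

lemma var_zero {α : Type*} [Fintype α] [DecidableEq α] {m : ℕ} (P : Matrix α α ℝ)
    (ι : α → Fin m → ℝ) (θ : α) : chainVar P ι 0 θ = 0 := by
  simp [chainVar, Matrix.one_apply, exp_zero, Finset.sum_ite_eq]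

/-- If the expectations of a Markov chain on a finite subset of ℝ^m contract in ℓ¹ at
rate rᵗ, then sup_θ Var_θ(Z_t) ≤ m (sup_θ Var_θ(Z₁)) min{t, (1-r²)⁻¹}. -/
theorem variance_bound_of_contraction {α : Type*} [Fintype α] [DecidableEq α] [Nonempty α] {m : ℕ}
    (P : Matrix α α ℝ) (hP_nonneg : ∀ x y, 0 ≤ P x y) (hP_row : ∀ x, ∑ y, P x y = 1)
    (ι : α → Fin m → ℝ) (hι : Function.Injective ι)
    (r : ℝ) (hr0 : 0 < r) (hr1 : r < 1)
    (hcontr : ∀ (θ θ' : α) (t : ℕ),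
      ∑ i, |chainExp P ι t θ i - chainExp P ι t θ' i| ≤ r ^ t * ∑ i, |ι θ i - ι θ' i|) :
    ∀ t : ℕ, (⨆ θ, chainVar P ι t θ) ≤
      m * (⨆ θ, chainVar P ι 1 θ) * min (t : ℝ) (1 - r ^ 2)⁻¹ := by
  have hrow := pow_row_sum P hP_row
  have hnn := pow_entry_nonneg P hP_nonneg
  have hVnn : ∀ (s : ℕ) (θ : α), 0 ≤ chainVar P ι s θ := fun s θ =>
    Finset.sum_nonneg fun x _ => mul_nonneg (hnn s θ x)
      (Finset.sum_nonneg fun i _ => sq_nonneg _)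
  have hbdd : ∀ s : ℕ, BddAbove (Set.range fun θ => chainVar P ι s θ) := fun s =>
    (Set.finite_range _).bddAbove
  have hV1nn : (0 : ℝ) ≤ ⨆ θ, chainVar P ι 1 θ :=
    le_trans (hVnn 1 (Classical.arbitrary α)) (le_ciSup (hbdd 1) _)
  have hr2 : r ^ 2 < 1 := by nlinarith
  have hr2nn : (0 : ℝ) ≤ r ^ 2 := sq_nonneg r
  -- Var at time 1 in pair form
  have hV1 : ∀ θ, chainVar P ι 1 θ
      = 1/2 * ∑ y, ∑ z, P θ y * P θ z * ∑ i, (ι y i - ι z i) ^ 2 := by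
    intro θ
    rw [var_succ P hP_row hrow ι 0 θ]
    simp only [var_zero, mul_zero, Finset.sum_const_zero, zero_add, exp_zero]
  -- contraction of coordinate differences
  have hD : ∀ (s : ℕ) (y z : α), ∑ i, (chainExp P ι s y i - chainExp P ι s z i) ^ 2
      ≤ r ^ (2 * s) * m * ∑ i, (ι y i - ι z i) ^ 2 := by
    intro s y z
    calc ∑ i, (chainExp P ι s y i - chainExp P ι s z i) ^ 2
        = ∑ i, |chainExp P ι s y i - chainExp P ι s z i| ^ 2 := by simp [sq_abs]
      _ ≤ (∑ i, |chainExp P ι s y i - chainExp P ι s z i|) ^ 2 :=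
          Finset.sum_sq_le_sq_sum_of_nonneg fun i _ => abs_nonneg _
      _ ≤ (r ^ s * ∑ i, |ι y i - ι z i|) ^ 2 := by
          apply pow_le_pow_left₀ (Finset.sum_nonneg fun i _ => abs_nonneg _) (hcontr y z s)
      _ = r ^ (2 * s) * (∑ i, |ι y i - ι z i|) ^ 2 := by
          rw [mul_pow, ← pow_mul, mul_comm s 2]
      _ ≤ r ^ (2 * s) * ((m : ℝ) * ∑ i, (ι y i - ι z i) ^ 2) := by
          apply mul_le_mul_of_nonneg_left _ (pow_nonneg hr0.le _)
          have := sq_sum_le_card_mul_sum_sq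
            (s := (Finset.univ : Finset (Fin m))) (f := fun i => |ι y i - ι z i|)
          simpa [sq_abs] using this
      _ = r ^ (2 * s) * m * ∑ i, (ι y i - ι z i) ^ 2 := by ring
  -- one-step recursion bound
  have hstep : ∀ (s : ℕ) (θ : α), chainVar P ι (s + 1) θ
      ≤ (⨆ θ', chainVar P ι s θ') + r ^ (2 * s) * m * chainVar P ι 1 θ := by
    intro s θ
    rw [var_succ P hP_row hrow ι s θ]
    refine add_le_add ?_ ?_
    · calc ∑ y, P θ y * chainVar P ι s y
          ≤ ∑ y, P θ y * (⨆ θ', chainVar P ι s θ') :=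
            Finset.sum_le_sum fun y _ =>
              mul_le_mul_of_nonneg_left (le_ciSup (hbdd s) y) (hP_nonneg θ y)
        _ = _ := by rw [← Finset.sum_mul, hP_row, one_mul]
    · rw [hV1 θ]
      have h1 : ∑ y, ∑ z, P θ y * P θ z *
            ∑ i, (chainExp P ι s y i - chainExp P ι s z i) ^ 2
          ≤ ∑ y, ∑ z, P θ y * P θ z *
            (r ^ (2 * s) * m * ∑ i, (ι y i - ι z i) ^ 2) :=
        Finset.sum_le_sum fun y _ => Finset.sum_le_sum fun z _ =>
          mul_le_mul_of_nonneg_left (hD s y z)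
            (mul_nonneg (hP_nonneg θ y) (hP_nonneg θ z))
      calc 1/2 * ∑ y, ∑ z, P θ y * P θ z *
            ∑ i, (chainExp P ι s y i - chainExp P ι s z i) ^ 2
          ≤ 1/2 * ∑ y, ∑ z, P θ y * P θ z *
            (r ^ (2 * s) * m * ∑ i, (ι y i - ι z i) ^ 2) := by linarith
        _ = r ^ (2 * s) * m *
            (1/2 * ∑ y, ∑ z, P θ y * P θ z * ∑ i, (ι y i - ι z i) ^ 2) := by
          have h2 : ∀ y z : α, P θ y * P θ z *
              (r ^ (2 * s) * m * ∑ i, (ι y i - ι z i) ^ 2)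
              = r ^ (2 * s) * m * (P θ y * P θ z * ∑ i, (ι y i - ι z i) ^ 2) :=
            fun y z => by ring
          simp_rw [h2, ← Finset.mul_sum]
          ring
  -- induction
  have claim : ∀ s : ℕ, (⨆ θ, chainVar P ι s θ)
      ≤ m * (⨆ θ, chainVar P ι 1 θ) * ∑ k ∈ Finset.range s, (r ^ 2) ^ k := by
    intro s
    induction s with
    | zero =>
      simp only [Finset.range_zero, Finset.sum_empty, mul_zero]
      exact ciSup_le fun θ => le_of_eq (var_zero P ι θ)
    | succ s ih =>
      refine ciSup_le fun θ => ?_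
      calc chainVar P ι (s + 1) θ
          ≤ (⨆ θ', chainVar P ι s θ') + r ^ (2 * s) * m * chainVar P ι 1 θ := hstep s θ
        _ ≤ m * (⨆ θ, chainVar P ι 1 θ) * ∑ k ∈ Finset.range s, (r ^ 2) ^ k
            + r ^ (2 * s) * m * (⨆ θ, chainVar P ι 1 θ) := by
          refine add_le_add ih ?_
          exact mul_le_mul_of_nonneg_left (le_ciSup (hbdd 1) θ)
            (mul_nonneg (pow_nonneg hr0.le _) (Nat.cast_nonneg m))
        _ = m * (⨆ θ, chainVar P ι 1 θ) * ∑ k ∈ Finset.range (s + 1), (r ^ 2) ^ k := by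
          rw [Finset.sum_range_succ, ← pow_mul, mul_comm 2 s]
          ring
  intro t
  refine le_trans (claim t) ?_
  refine mul_le_mul_of_nonneg_left (le_min ?_ ?_) (mul_nonneg (Nat.cast_nonneg m) hV1nn)
  · calc ∑ k ∈ Finset.range t, (r ^ 2) ^ k ≤ ∑ _k ∈ Finset.range t, (1 : ℝ) :=
        Finset.sum_le_sum fun k _ => pow_le_one₀ hr2nn hr2.le
      _ = t := by simp
  · refine le_trans (Summable.sum_le_tsum (Finset.range t)
      (fun k _ => pow_nonneg hr2nn k) (summable_geometric_of_lt_one hr2nn hr2)) ?_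
    exact le_of_eq (tsum_geometric_of_lt_one hr2nn hr2)
end

section
/- Let p₁,…,p_m > 0 with Σᵢ pᵢ = 1, let β > 0, and let a = (a₁,…,a_m) be the positive ℓ¹-normalized left Perron eigenvector of the matrix A with diagonal entries 1 - 1/n and off-diagonal (i,j) entries β pᵢ/n. Define β_cr := 1/((m-1) Σᵢ aᵢ pᵢ). Then β_cr = (Σᵢ aᵢ² pᵢ) / ((Σᵢ aᵢ pᵢ)² - Σᵢ aᵢ² pᵢ²). -/
/-- Alternative characterization of the critical temperature:
1/((m-1) Σᵢ aᵢpᵢ) = (Σᵢ aᵢ²pᵢ) / ((Σᵢ aᵢpᵢ)² - Σᵢ aᵢ²pᵢ²), where a is the positive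
ℓ¹-normalized left Perron eigenvector of A. -/
theorem beta_cr_characterization {m n : ℕ} (hm : 2 ≤ m) (hn : 1 ≤ n)
    (p : Fin m → ℝ) (hp : ∀ i, 0 < p i) (hp1 : ∑ i, p i = 1)
    (β : ℝ) (hβ : 0 < β)
    (A : Matrix (Fin m) (Fin m) ℝ)
    (hA : ∀ i j, A i j = if i = j then 1 - 1 / (n : ℝ) else β * p i / n)
    (g : ℝ) (a : Fin m → ℝ) (ha_pos : ∀ i, 0 < a i) (ha1 : ∑ i, a i = 1)
    (ha : Matrix.vecMul a A = g • a) :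
    1 / (((m : ℝ) - 1) * ∑ i, a i * p i) =
      (∑ i, a i ^ 2 * p i) / ((∑ i, a i * p i) ^ 2 - ∑ i, a i ^ 2 * p i ^ 2) := by
  have hn' : (n : ℝ) ≠ 0 := by positivity
  set S := ∑ i, a i * p i with hS
  set c : ℝ := (g - 1 + 1 / n) * n / β with hc
  have key : ∀ k, S - a k * p k = c * a k := by
    intro k
    have h1 := congrFun ha k
    rw [Matrix.vecMul, dotProduct] at h1
    have hsplit : ∑ i, a i * A i k
        = a k * (1 - 1 / n) + ∑ i ∈ Finset.univ.erase k, a i * (β * p i / n) := by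
      rw [← Finset.add_sum_erase _ _ (Finset.mem_univ k), hA]
      simp only [if_pos rfl]
      congr 1
      apply Finset.sum_congr rfl
      intro i hi
      rw [hA, if_neg (Finset.ne_of_mem_erase hi)]
    have herase : ∑ i ∈ Finset.univ.erase k, a i * (β * p i / n)
        = (β / n) * (S - a k * p k) := by
      have : S - a k * p k = ∑ i ∈ Finset.univ.erase k, a i * p i := by
        rw [hS, ← Finset.add_sum_erase _ _ (Finset.mem_univ k)]; ring
      rw [this, Finset.mul_sum]
      apply Finset.sum_congr rfl
      intro i _
      ring
    rw [hsplit, herase] at h1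
    simp only [Pi.smul_apply, smul_eq_mul] at h1
    rw [hc]
    field_simp at h1 ⊢
    linear_combination h1
  have hSpos : 0 < S := by
    rw [hS]
    exact Finset.sum_pos (fun i _ => mul_pos (ha_pos i) (hp i))
      (Finset.univ_nonempty_iff.mpr ⟨⟨0, by omega⟩⟩)
  -- sum key over k: m*S - S = c
  have hsum : (m : ℝ) * S - S = c := by
    have := Finset.sum_congr rfl (fun k (_ : k ∈ Finset.univ) => key k)
    simp only [Finset.sum_sub_distrib, Finset.sum_const, Finset.card_univ,
      Fintype.card_fin, nsmul_eq_mul, ← Finset.mul_sum, ha1] at this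
    simpa [hS] using this
  -- multiply key by a k * p k and sum
  set T := ∑ i, a i ^ 2 * p i with hT
  have hTpos : 0 < T := by
    rw [hT]
    exact Finset.sum_pos (fun i _ => mul_pos (pow_pos (ha_pos i) 2) (hp i))
      (Finset.univ_nonempty_iff.mpr ⟨⟨0, by omega⟩⟩)
  have hmul : S ^ 2 - ∑ i, a i ^ 2 * p i ^ 2 = c * T := by
    have heach : ∀ k, S * (a k * p k) - a k ^ 2 * p k ^ 2 = c * (a k ^ 2 * p k) := by
      intro k
      linear_combination (a k * p k) * key k
    calc S ^ 2 - ∑ i, a i ^ 2 * p i ^ 2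
        = ∑ k, (S * (a k * p k) - a k ^ 2 * p k ^ 2) := by
          rw [Finset.sum_sub_distrib, ← Finset.mul_sum, ← hS]; ring
      _ = ∑ k, c * (a k ^ 2 * p k) := Finset.sum_congr rfl (fun k _ => heach k)
      _ = c * T := by rw [← Finset.mul_sum, hT]
  have hceq : c = ((m : ℝ) - 1) * S := by rw [← hsum]; ring
  rw [hmul, hceq]
  have hm1 : (0 : ℝ) < (m : ℝ) - 1 := by
    have : (2 : ℝ) ≤ m := by exact_mod_cast hm
    linarith
  have h2 : ((m : ℝ) - 1) * S ≠ 0 := by positivity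
  field_simp
end
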